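/- arXiv:hep-th/9711041 — 7 statements merged into one kernel-verified Lean document; each statement's English description precedes it below -/
import Mathlib

section
/- Let e, m ∈ ℝ, let A₀ : ℝ → ℝ be differentiable, and let φ : ℝ → ℂ⁴ be differentiable. Define ψ : ℝ⁴ → ℂ⁴ by ψ(x₀,x₁,x₂,x₃) = φ(x₃). Then ψ satisfies the Dirac equation i·Σ_{μ=0}^{3} γ_μ ∂ψ/∂x_μ − (e·γ₀·A₀(x₃) + m)ψ = 0 at every point of ℝ⁴ if and only if the function χ : ℝ → ℂ⁴ defined by χ(x) = φ(x/2) satisfies χ'(x) = V(x)J₃χ(x) + mJ₂χ(x) for all x ∈ ℝ, where V(x) = e·A₀(x/2), J₂ = (i/2)γ₃ and J₃ = (i/2)γ₃γ₀. -/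
open Matrix Complex

/-- The Dirac matrices in the Dirac representation:
`γ₀ = diag(1,1,-1,-1)` and `γ_k = [[0, σ_k], [-σ_k, 0]]` for `k = 1,2,3`,
where `σ₁ = [[0,1],[1,0]]`, `σ₂ = [[0,-i],[i,0]]`, `σ₃ = diag(1,-1)`. -/
noncomputable def diracGamma : Fin 4 → Matrix (Fin 4) (Fin 4) ℂ
  | 0 => !![1, 0, 0, 0;
            0, 1, 0, 0;
            0, 0, -1, 0;
            0, 0, 0, -1]
  | 1 => !![0, 0, 0, 1;
            0, 0, 1, 0;
            0, -1, 0, 0;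
            -1, 0, 0, 0]
  | 2 => !![0, 0, 0, -Complex.I;
            0, 0, Complex.I, 0;
            0, Complex.I, 0, 0;
            -Complex.I, 0, 0, 0]
  | 3 => !![0, 0, 1, 0;
            0, 0, 0, -1;
            -1, 0, 0, 0;
            0, 1, 0, 0]

lemma M_sq : (Complex.I • diracGamma 3) * (Complex.I • diracGamma 3) = 1 := by
  ext i j
  fin_cases i <;> fin_cases j <;>
    simp [diracGamma, Matrix.mul_apply, Fin.sum_univ_four, Matrix.one_apply, Complex.ext_iff,
      Matrix.vecHead, Matrix.vecTail]

lemma M_cancel (v : Fin 4 → ℂ) :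
    (Complex.I • diracGamma 3) *ᵥ ((Complex.I • diracGamma 3) *ᵥ v) = v := by
  rw [Matrix.mulVec_mulVec, M_sq, Matrix.one_mulVec]

lemma M_shift (a b : Fin 4 → ℂ) :
    (Complex.I • diracGamma 3) *ᵥ a = b ↔ a = (Complex.I • diracGamma 3) *ᵥ b := by
  constructor
  · rintro rfl; rw [M_cancel]
  · rintro rfl; rw [M_cancel]

/-- A spinor `ψ(x₀,x₁,x₂,x₃) = φ(x₃)` satisfies the Dirac equation
`i Σ_μ γ_μ ∂_μ ψ - (e γ₀ A₀(x₃) + m) ψ = 0` if and only if `χ(x) = φ(x/2)` satisfies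
`χ'(x) = V(x) J₃ χ(x) + m J₂ χ(x)`, with `V(x) = e A₀(x/2)`, `J₂ = (i/2)γ₃`,
`J₃ = (i/2)γ₃γ₀`. -/
theorem dirac_reduction_iff (e m : ℝ) (A₀ : ℝ → ℝ) (hA : Differentiable ℝ A₀)
    (φ : ℝ → (Fin 4 → ℂ)) (hφ : Differentiable ℝ φ)
    (ψ : (Fin 4 → ℝ) → (Fin 4 → ℂ)) (hψ : ∀ x, ψ x = φ (x 3))
    (χ : ℝ → (Fin 4 → ℂ)) (hχ : ∀ x, χ x = φ (x / 2))
    (V : ℝ → ℂ) (hV : ∀ x, V x = (e : ℂ) * (A₀ (x / 2) : ℂ))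
    (J2 J3 : Matrix (Fin 4) (Fin 4) ℂ)
    (hJ2 : J2 = (Complex.I / 2) • diracGamma 3)
    (hJ3 : J3 = (Complex.I / 2) • (diracGamma 3 * diracGamma 0)) :
    (∀ x : Fin 4 → ℝ,
        Complex.I • (∑ μ : Fin 4, diracGamma μ *ᵥ (fderiv ℝ ψ x (Pi.single μ 1)))
          - (((e : ℂ) * (A₀ (x 3) : ℂ)) • diracGamma 0
              + (m : ℂ) • (1 : Matrix (Fin 4) (Fin 4) ℂ)) *ᵥ ψ x = 0)
      ↔ (∀ x : ℝ, HasDerivAt χ (V x • (J3 *ᵥ χ x) + (m : ℂ) • (J2 *ᵥ χ x)) x) := by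
  have hψfun : ψ = fun x => φ (x 3) := funext hψ
  have hχfun : χ = fun x => φ (x / 2) := funext hχ
  -- fderiv of ψ
  have hψd : ∀ x : Fin 4 → ℝ, ∀ μ : Fin 4,
      fderiv ℝ ψ x (Pi.single μ 1) = ((Pi.single μ 1 : Fin 4 → ℝ) 3) • deriv φ (x 3) := by
    intro x μ
    have hproj : HasFDerivAt (fun y : Fin 4 → ℝ => y 3)
        (ContinuousLinearMap.proj (R := ℝ) (φ := fun _ : Fin 4 => ℝ) 3) x :=
      (ContinuousLinearMap.proj (R := ℝ) (φ := fun _ : Fin 4 => ℝ) 3).hasFDerivAt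
    have hφ' : HasFDerivAt φ
        ((1 : ℝ →L[ℝ] ℝ).smulRight (deriv φ (x 3))) (x 3) :=
      ((hφ (x 3)).hasDerivAt).hasFDerivAt
    have hc : HasFDerivAt ψ
        (((1 : ℝ →L[ℝ] ℝ).smulRight (deriv φ (x 3))).comp
          (ContinuousLinearMap.proj (R := ℝ) (φ := fun _ : Fin 4 => ℝ) 3)) x := by
      rw [hψfun]; exact hφ'.comp x hproj
    rw [hc.fderiv]
    simp
  -- derivative of χ
  have hχd : ∀ x : ℝ, HasDerivAt χ ((2:ℝ)⁻¹ • deriv φ (x / 2)) x := by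
    intro x
    have h1 : HasDerivAt (fun y : ℝ => y / 2) (2:ℝ)⁻¹ x := by
      simpa using (hasDerivAt_id x).div_const 2
    have h2 : HasDerivAt φ (deriv φ (x / 2)) (x / 2) := (hφ (x / 2)).hasDerivAt
    have h3 := HasDerivAt.scomp x h2 h1
    rw [hχfun]
    exact h3
  -- intermediate proposition: the matrix identity at a point t
  have key : ∀ t : ℝ,
      ((Complex.I • diracGamma 3) *ᵥ deriv φ t
          = ((e : ℂ) * (A₀ t : ℂ)) • (diracGamma 0 *ᵥ φ t) + (m : ℂ) • φ t)
        ↔ ((e : ℂ) * (A₀ t : ℂ)) • (J3 *ᵥ φ t) + (m : ℂ) • (J2 *ᵥ φ t)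
          = (2:ℝ)⁻¹ • deriv φ t := by
    intro t
    rw [M_shift]
    constructor
    · intro h
      rw [h, hJ2, hJ3]
      funext i
      simp only [Pi.add_apply, Pi.smul_apply, Matrix.mulVec_add, Matrix.mulVec_smul,
        Matrix.smul_mulVec, ← Matrix.mulVec_mulVec, smul_smul, smul_eq_mul,
        Complex.real_smul, Complex.ofReal_inv, Complex.ofReal_ofNat]
      ring
    · intro h
      have h' : deriv φ t = ((e : ℂ) * (A₀ t : ℂ)) • ((2:ℂ) • (J3 *ᵥ φ t))
          + (m : ℂ) • ((2:ℂ) • (J2 *ᵥ φ t)) := by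
        funext i
        have := congrFun h i
        simp only [Pi.add_apply, Pi.smul_apply, smul_eq_mul, Complex.real_smul,
          Complex.ofReal_inv, Complex.ofReal_ofNat] at this ⊢
        field_simp at this
        linear_combination -this
      rw [h', hJ2, hJ3]
      funext i
      simp only [Pi.add_apply, Pi.smul_apply, Matrix.mulVec_add, Matrix.mulVec_smul,
        Matrix.smul_mulVec, ← Matrix.mulVec_mulVec, smul_smul, smul_eq_mul]
      ring
  constructor
  · intro H x
    have h0 := H (fun _ => x / 2)
    rw [sub_eq_zero] at h0
    have hs : (∑ μ : Fin 4, diracGamma μ *ᵥ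
        (fderiv ℝ ψ (fun _ => x / 2) (Pi.single μ 1)))
        = diracGamma 3 *ᵥ deriv φ (x / 2) := by
      rw [Fin.sum_univ_four]
      simp [hψd]
    rw [hs] at h0
    have heq : (Complex.I • diracGamma 3) *ᵥ deriv φ (x / 2)
        = ((e : ℂ) * (A₀ (x / 2) : ℂ)) • (diracGamma 0 *ᵥ φ (x / 2))
          + (m : ℂ) • φ (x / 2) := by
      rw [Matrix.smul_mulVec]
      rw [h0, hψ, Matrix.add_mulVec, Matrix.smul_mulVec, Matrix.smul_mulVec,
        Matrix.one_mulVec]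
    have hk := (key (x / 2)).mp heq
    have hgoal : V x • (J3 *ᵥ χ x) + (m : ℂ) • (J2 *ᵥ χ x) = (2:ℝ)⁻¹ • deriv φ (x / 2) := by
      rw [hV, hχ]; exact hk
    rw [hgoal]
    exact hχd x
  · intro H x
    set t := x 3 with ht
    -- from H at 2t get the reduced equation at t
    have h1 := H (2 * t)
    have h2 := hχd (2 * t)
    have h22 : (2 * t) / 2 = t := by ring
    rw [h22] at h2
    have huniq := h1.unique h2
    rw [hV, hχ, h22] at huniq
    have heq2 : (Complex.I • diracGamma 3) *ᵥ deriv φ t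
        = ((e : ℂ) * (A₀ t : ℂ)) • (diracGamma 0 *ᵥ φ t) + (m : ℂ) • φ t :=
      (key t).mpr huniq
    have hs : (∑ μ : Fin 4, diracGamma μ *ᵥ (fderiv ℝ ψ x (Pi.single μ 1)))
        = diracGamma 3 *ᵥ deriv φ t := by
      rw [Fin.sum_univ_four]
      simp [hψd, ht]
    rw [hs, sub_eq_zero, hψ, ← ht]
    rw [Matrix.add_mulVec, Matrix.smul_mulVec, Matrix.smul_mulVec,
      Matrix.one_mulVec, ← Matrix.smul_mulVec]
    exact heq2
end

section
/- Let J₁, J₂, J₃ be 4×4 complex matrices satisfying [J₁,J₂] = J₃, [J₂,J₃] = J₁, [J₃,J₁] = J₂. Let V : ℝ → ℂ be three times differentiable, let m, C₁, C₃ ∈ ℂ, and assume V satisfies the stationary mKdV equation C₁(V''' + (3/2)V²V') = C₃V' on ℝ. Define Q(x) = C₁m³J₂ + C₁V(x)m²J₃ − C₁V'(x)mJ₁ + (−(1/2)C₁V(x)² + C₃)mJ₂ + (−C₁(V''(x) + (1/2)V(x)³) + C₃V(x))J₃. Then Q'(x) = V(x)[J₃, Q(x)] + m[J₂, Q(x)]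 for all x ∈ ℝ; that is, Q is a Lie symmetry of the operator L = d/dx − V(x)J₃ − mJ₂. -/
open Matrix

/-- If `V` satisfies the stationary mKdV equation `C₁(V''' + (3/2)V²V') = C₃V'`, then
`Q(x) = C₁m³J₂ + C₁V m²J₃ - C₁V' m J₁ + (-(1/2)C₁V² + C₃) m J₂
        + (-C₁(V'' + (1/2)V³) + C₃V) J₃`
is a Lie symmetry of `L = d/dx - V(x)J₃ - mJ₂`, i.e. `Q' = V[J₃,Q] + m[J₂,Q]`. -/
theorem mkdv_gives_lie_symmetry
    (J1 J2 J3 : Matrix (Fin 4) (Fin 4) ℂ)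
    (h12 : J1 * J2 - J2 * J1 = J3)
    (h23 : J2 * J3 - J3 * J2 = J1)
    (h31 : J3 * J1 - J1 * J3 = J2)
    (V : ℝ → ℂ)
    (hV : Differentiable ℝ V)
    (hV' : Differentiable ℝ (deriv V))
    (hV'' : Differentiable ℝ (deriv (deriv V)))
    (m C1 C3 : ℂ)
    (hmkdv : ∀ x, C1 * (deriv (deriv (deriv V)) x + (3 / 2) * V x ^ 2 * deriv V x)
        = C3 * deriv V x)
    (Q : ℝ → Matrix (Fin 4) (Fin 4) ℂ)
    (hQ : ∀ x, Q x =
        (C1 * m ^ 3) • J2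
      + (C1 * V x * m ^ 2) • J3
      + (-(C1 * deriv V x * m)) • J1
      + ((-(1 / 2) * C1 * V x ^ 2 + C3) * m) • J2
      + (-(C1 * (deriv (deriv V) x + (1 / 2) * V x ^ 3)) + C3 * V x) • J3) :
    ∀ (x : ℝ) (i j : Fin 4),
      HasDerivAt (fun y => Q y i j)
        ((V x • (J3 * Q x - Q x * J3) + m • (J2 * Q x - Q x * J2)) i j) x := by
  intro x i j
  have e12 : J1 * J2 = J3 + J2 * J1 := eq_add_of_sub_eq h12
  have e23 : J2 * J3 = J1 + J3 * J2 := eq_add_of_sub_eq h23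
  have e31 : J3 * J1 = J2 + J1 * J3 := eq_add_of_sub_eq h31
  have key : V x • (J3 * Q x - Q x * J3) + m • (J2 * Q x - Q x * J2)
      = (-(V x) * (C1 * m ^ 3 + (-(1 / 2) * C1 * V x ^ 2 + C3) * m)
          + m * (C1 * V x * m ^ 2
            + (-(C1 * (deriv (deriv V) x + (1 / 2) * V x ^ 3)) + C3 * V x))) • J1
        + (V x * (-(C1 * deriv V x * m))) • J2
        + (-(m * (-(C1 * deriv V x * m)))) • J3 := by
    rw [hQ x]
    simp only [Matrix.mul_add, Matrix.add_mul, Matrix.mul_smul, Matrix.smul_mul]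
    rw [e12, e23, e31]
    module
  rw [key]
  simp only [Matrix.add_apply, Matrix.smul_apply, smul_eq_mul]
  have h1 : HasDerivAt V (deriv V x) x := (hV x).hasDerivAt
  have h2 : HasDerivAt (deriv V) (deriv (deriv V) x) x := (hV' x).hasDerivAt
  have h3 : HasDerivAt (deriv (deriv V)) (deriv (deriv (deriv V)) x) x := (hV'' x).hasDerivAt
  have tp2 : HasDerivAt (fun y => V y ^ 2) (deriv V x * V x + V x * deriv V x) x := by
    simpa [pow_two] using h1.fun_mul h1
  have tp3 : HasDerivAt (fun y => V y ^ 3)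
      ((deriv V x * V x + V x * deriv V x) * V x + V x ^ 2 * deriv V x) x := by
    simpa [← pow_succ] using tp2.fun_mul h1
  have t2 := ((h1.const_mul C1).mul_const (m ^ 2)).mul_const (J3 i j)
  have t3 := (((h2.const_mul C1).mul_const m).neg).mul_const (J1 i j)
  have t4 := (((tp2.const_mul (-(1 / 2) * C1)).add_const C3).mul_const m).mul_const (J2 i j)
  have t5 := ((((h3.add (tp3.const_mul (1 / 2))).const_mul C1).neg).add
    (h1.const_mul C3)).mul_const (J3 i j)
  have hd := ((((hasDerivAt_const x (C1 * m ^ 3 * J2 i j)).add t2).add t3).add t4).add t5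
  simp only [hQ, Matrix.add_apply, Matrix.smul_apply, smul_eq_mul]
  refine hd.congr_deriv ?_
  linear_combination -(J3 i j) * hmkdv x
end

section
/- Let J₁, J₂, J₃ be 4×4 complex matrices satisfying [J₁,J₂] = J₃, [J₂,J₃] = J₁, [J₃,J₁] = J₂. Let V : ℝ → ℂ be twice differentiable, let m, C₂, C₄ ∈ ℂ, and assume V satisfies the nonlinear ODE C₂(V'' + (1/2)V³) = C₄V on ℝ. Define Q(x) = C₂m²J₂ + C₂V(x)mJ₃ − C₂V'(x)J₁ + (−(1/2)C₂V(x)² + C₄)J₂. Then Q'(x) = V(x)[J₃, Q(x)] + m[J₂, Q(x)] for all x ∈ ℝ; that is, Q is a Lie symmetry of the operator L = d/dx − V(x)J₃ − mJ₂. -/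
open Matrix

/-- If `V` satisfies the nonlinear ODE `C₂(V'' + (1/2)V³) = C₄V`, then
`Q(x) = C₂m²J₂ + C₂V m J₃ - C₂V' J₁ + (-(1/2)C₂V² + C₄) J₂`
is a Lie symmetry of `L = d/dx - V(x)J₃ - mJ₂`, i.e. `Q' = V[J₃,Q] + m[J₂,Q]`. -/
theorem ode_gives_lie_symmetry
    (J1 J2 J3 : Matrix (Fin 4) (Fin 4) ℂ)
    (h12 : J1 * J2 - J2 * J1 = J3)
    (h23 : J2 * J3 - J3 * J2 = J1)
    (h31 : J3 * J1 - J1 * J3 = J2)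
    (V : ℝ → ℂ)
    (hV : Differentiable ℝ V)
    (hV' : Differentiable ℝ (deriv V))
    (m C2 C4 : ℂ)
    (hode : ∀ x, C2 * (deriv (deriv V) x + (1 / 2) * V x ^ 3) = C4 * V x)
    (Q : ℝ → Matrix (Fin 4) (Fin 4) ℂ)
    (hQ : ∀ x, Q x =
        (C2 * m ^ 2) • J2
      + (C2 * V x * m) • J3
      + (-(C2 * deriv V x)) • J1
      + (-(1 / 2) * C2 * V x ^ 2 + C4) • J2) :
    ∀ (x : ℝ) (i j : Fin 4),
      HasDerivAt (fun y => Q y i j)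
        ((V x • (J3 * Q x - Q x * J3) + m • (J2 * Q x - Q x * J2)) i j) x := by
  intro x i j
  have e21 : J2 * J1 = J1 * J2 - J3 := by rw [← h12]; abel
  have e32 : J3 * J2 = J2 * J3 - J1 := by rw [← h23]; abel
  have e31 : J3 * J1 = J1 * J3 + J2 := by rw [← h31]; abel
  have hd2 : -(C2 * deriv (deriv V) x) = 1/2 * C2 * V x ^ 3 - C4 * V x := by
    linear_combination -hode x
  have key : V x • (J3 * Q x - Q x * J3) + m • (J2 * Q x - Q x * J2)
      = (C2 * deriv V x * m) • J3 + (-(C2 * deriv (deriv V) x)) • J1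
        + (-(C2 * V x * deriv V x)) • J2 := by
    rw [hQ x, hd2]
    simp only [mul_add, add_mul, mul_sub, sub_mul, Matrix.mul_smul, Matrix.smul_mul,
      e21, e32, e31]
    module
  rw [key]
  have hfun : (fun y => Q y i j) = fun y =>
      C2 * m ^ 2 * J2 i j + C2 * V y * m * J3 i j + -(C2 * deriv V y) * J1 i j
        + (-(1/2) * C2 * V y ^ 2 + C4) * J2 i j := by
    funext y
    rw [hQ y]
    simp [Matrix.add_apply, Matrix.smul_apply, smul_eq_mul]
  rw [hfun]
  have h1 : HasDerivAt (fun y => C2 * V y * m * J3 i j)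
      (C2 * deriv V x * m * J3 i j) x :=
    (((hV x).hasDerivAt.const_mul C2).mul_const m).mul_const _
  have h2 : HasDerivAt (fun y => -(C2 * deriv V y) * J1 i j)
      (-(C2 * deriv (deriv V) x) * J1 i j) x :=
    ((hV' x).hasDerivAt.const_mul C2).neg.mul_const _
  have h3 : HasDerivAt (fun y => (-(1/2) * C2 * V y ^ 2 + C4) * J2 i j)
      (-(1/2) * C2 * (2 * V x * deriv V x) * J2 i j) x := by
    have hp : HasDerivAt (fun y => V y ^ 2) (deriv V x * V x + V x * deriv V x) x := by
      have hm := (hV x).hasDerivAt.mul (hV x).hasDerivAt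
      simp only [pow_two]
      exact hm
    exact (((hp.const_mul (-(1/2) * C2)).add_const C4).mul_const _).congr_deriv (by ring)
  have := (((hasDerivAt_const x (C2 * m ^ 2 * J2 i j)).add h1).add h2).add h3
  convert this using 1
  · rfl
  · rfl
  simp only [Matrix.add_apply, Matrix.smul_apply, smul_eq_mul]
  ring
end

section
/- Let V : ℝ → ℂ be three times differentiable and let a_k, b_k, c_k, d_k : ℝ → ℂ (k = 1,2,3) be differentiable functions satisfying on all of ℝ the determining equations: d₁ = 0, d₃ = 0; d₁' = −V·d₂ + c₃, d₂' = V·d₁, d₃' = −c₁; c₁' = −V·c₂ + b₃, c₂' = V·c₁, c₃' = −b₁; b₁' = −V·b₂ + a₃, b₂' = V·b₁, b₃' = −a₁; a₁' = −V·a₂, a₂' = V·a₁, a₃' = 0. Then there exist constants C₁, C₂, C₃, C₄ ∈ ℂ such that d₂ = C₁, c₁ = 0, c₂ = C₂, c₃ = C₁V, b₁ = −C₁V', b₂ = −(1/2)C₁V² + C₃, b₃ = C₂V, a₁ = −C₂V', a₂ = −(1/2)C₂V² + C₄, a₃ = −C₁(V'' + (1/2)V³) + C₃V, and moreover V satisfies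 the two nonlinear ODEs C₁(V''' + (3/2)V²V') = C₃V' and C₂(V'' + (1/2)V³) = C₄V on ℝ. -/
lemma my_const (f : ℝ → ℂ) (h : ∀ x, HasDerivAt f 0 x) : ∀ x, f x = f 0 :=
  fun x => is_const_of_deriv_eq_zero (fun y => (h y).differentiableAt)
    (fun y => (h y).deriv) x 0

/-- Integrating the determining equations: any solution of the determining
equations is given in terms of four constants `C₁, C₂, C₃, C₄` and the potential `V`,
which furthermore must satisfy `C₁(V''' + (3/2)V²V') = C₃V'` and
`C₂(V'' + (1/2)V³) = C₄V`. -/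
theorem determining_equations_solution
    (V a1 a2 a3 b1 b2 b3 c1 c2 c3 d1 d2 d3 : ℝ → ℂ)
    (hV : Differentiable ℝ V)
    (hV' : Differentiable ℝ (deriv V))
    (hV'' : Differentiable ℝ (deriv (deriv V)))
    (ha1 : Differentiable ℝ a1) (ha2 : Differentiable ℝ a2) (ha3 : Differentiable ℝ a3)
    (hb1 : Differentiable ℝ b1) (hb2 : Differentiable ℝ b2) (hb3 : Differentiable ℝ b3)
    (hc1 : Differentiable ℝ c1) (hc2 : Differentiable ℝ c2) (hc3 : Differentiable ℝ c3)
    (hd1 : Differentiable ℝ d1) (hd2 : Differentiable ℝ d2) (hd3 : Differentiable ℝ d3)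
    (e1 : ∀ x, d1 x = 0) (e2 : ∀ x, d3 x = 0)
    (e3 : ∀ x, deriv d1 x = -V x * d2 x + c3 x)
    (e4 : ∀ x, deriv d2 x = V x * d1 x)
    (e5 : ∀ x, deriv d3 x = -c1 x)
    (e6 : ∀ x, deriv c1 x = -V x * c2 x + b3 x)
    (e7 : ∀ x, deriv c2 x = V x * c1 x)
    (e8 : ∀ x, deriv c3 x = -b1 x)
    (e9 : ∀ x, deriv b1 x = -V x * b2 x + a3 x)
    (e10 : ∀ x, deriv b2 x = V x * b1 x)
    (e11 : ∀ x, deriv b3 x = -a1 x)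
    (e12 : ∀ x, deriv a1 x = -V x * a2 x)
    (e13 : ∀ x, deriv a2 x = V x * a1 x)
    (e14 : ∀ x, deriv a3 x = 0) :
    ∃ C1 C2 C3 C4 : ℂ,
      (∀ x, d2 x = C1) ∧
      (∀ x, c1 x = 0) ∧
      (∀ x, c2 x = C2) ∧
      (∀ x, c3 x = C1 * V x) ∧
      (∀ x, b1 x = -C1 * deriv V x) ∧
      (∀ x, b2 x = -(1 / 2) * C1 * V x ^ 2 + C3) ∧
      (∀ x, b3 x = C2 * V x) ∧
      (∀ x, a1 x = -C2 * deriv V x) ∧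
      (∀ x, a2 x = -(1 / 2) * C2 * V x ^ 2 + C4) ∧
      (∀ x, a3 x = -C1 * (deriv (deriv V) x + (1 / 2) * V x ^ 3) + C3 * V x) ∧
      (∀ x, C1 * (deriv (deriv (deriv V)) x + (3 / 2) * V x ^ 2 * deriv V x)
          = C3 * deriv V x) ∧
      (∀ x, C2 * (deriv (deriv V) x + (1 / 2) * V x ^ 3) = C4 * V x) := by
  obtain ⟨C1, hC1def⟩ : ∃ c : ℂ, c = d2 0 := ⟨_, rfl⟩
  obtain ⟨C2, hC2def⟩ : ∃ c : ℂ, c = c2 0 := ⟨_, rfl⟩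
  have hd1fun : d1 = fun _ => (0:ℂ) := funext e1
  have hd3fun : d3 = fun _ => (0:ℂ) := funext e2
  have hderiv_d1 : ∀ x, deriv d1 x = 0 := by intro x; rw [hd1fun]; simp
  have hderiv_d3 : ∀ x, deriv d3 x = 0 := by intro x; rw [hd3fun]; simp
  -- d2 constant
  have hd2c : ∀ x, d2 x = C1 := by
    intro x
    rw [hC1def]
    exact my_const d2 (fun y => by
      have h := (hd2 y).hasDerivAt
      rwa [e4 y, e1 y, mul_zero] at h) x
  -- c1 = 0
  have hc1z : ∀ x, c1 x = 0 := by
    intro x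
    have h := e5 x
    rw [hderiv_d3 x] at h
    linear_combination h
  -- c3 = C1 V
  have hc3 : ∀ x, c3 x = C1 * V x := by
    intro x
    have h := e3 x
    rw [hderiv_d1 x, hd2c x] at h
    linear_combination -h
  have hc1fun : c1 = fun _ => (0:ℂ) := funext hc1z
  have hderiv_c1 : ∀ x, deriv c1 x = 0 := by intro x; rw [hc1fun]; simp
  -- c2 constant
  have hc2c : ∀ x, c2 x = C2 := by
    intro x
    rw [hC2def]
    exact my_const c2 (fun y => by
      have h := (hc2 y).hasDerivAt
      rwa [e7 y, hc1z y, mul_zero] at h) x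
  -- b3 = C2 V
  have hb3 : ∀ x, b3 x = C2 * V x := by
    intro x
    have h := e6 x
    rw [hderiv_c1 x, hc2c x] at h
    linear_combination -h
  -- b1 = -C1 V'
  have hderiv_c3 : ∀ x, deriv c3 x = C1 * deriv V x := by
    intro x
    have h : c3 = fun y => C1 * V y := funext hc3
    rw [h, deriv_const_mul _ (hV x)]
  have hb1 : ∀ x, b1 x = -C1 * deriv V x := by
    intro x
    have h := e8 x
    rw [hderiv_c3 x] at h
    linear_combination h
  -- b2
  have hsq : ∀ (k : ℂ) x, HasDerivAt (fun y => k * V y ^ 2) (k * (2 * V x * deriv V x)) x := by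
    intro k x
    have hVd := (hV x).hasDerivAt
    have h : HasDerivAt (fun y => k * (V y * V y)) (k * (deriv V x * V x + V x * deriv V x)) x :=
      (hVd.mul hVd).const_mul k
    have heq : (fun y => k * (V y * V y)) = fun y => k * V y ^ 2 := by
      funext y; ring
    rw [heq] at h
    convert h using 1
    ring
  have hgd : ∀ x, HasDerivAt (fun y => b2 y + (1/2:ℂ)*C1*V y^2) 0 x := by
    intro x
    have h1 : HasDerivAt b2 (V x * b1 x) x := (e10 x) ▸ (hb2 x).hasDerivAt
    have h : HasDerivAt (fun y => b2 y + (1/2:ℂ)*C1*V y^2)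
        (V x * b1 x + (1/2:ℂ)*C1*(2 * V x * deriv V x)) x := h1.add (hsq ((1/2:ℂ)*C1) x)
    convert h using 1
    rw [hb1 x]
    ring
  obtain ⟨C3, hC3def⟩ : ∃ c : ℂ, c = b2 0 + (1/2:ℂ)*C1*V 0^2 := ⟨_, rfl⟩
  have hb2c : ∀ x, b2 x = -(1/2) * C1 * V x ^ 2 + C3 := by
    intro x
    have h := my_const _ hgd x
    rw [hC3def]
    linear_combination h
  -- a3
  have hderiv_b1 : ∀ x, deriv b1 x = -C1 * deriv (deriv V) x := by
    intro x
    have h : b1 = fun y => -C1 * deriv V y := funext hb1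
    rw [h, deriv_const_mul _ (hV' x)]
  have ha3 : ∀ x, a3 x = -C1 * (deriv (deriv V) x + (1/2) * V x ^ 3) + C3 * V x := by
    intro x
    have h := e9 x
    rw [hderiv_b1 x, hb2c x] at h
    linear_combination -h
  -- a1 = -C2 V'
  have hderiv_b3 : ∀ x, deriv b3 x = C2 * deriv V x := by
    intro x
    have h : b3 = fun y => C2 * V y := funext hb3
    rw [h, deriv_const_mul _ (hV x)]
  have ha1 : ∀ x, a1 x = -C2 * deriv V x := by
    intro x
    have h := e11 x
    rw [hderiv_b3 x] at h
    linear_combination h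
  -- a2
  have hgd2 : ∀ x, HasDerivAt (fun y => a2 y + (1/2:ℂ)*C2*V y^2) 0 x := by
    intro x
    have h1 : HasDerivAt a2 (V x * a1 x) x := (e13 x) ▸ (ha2 x).hasDerivAt
    have h : HasDerivAt (fun y => a2 y + (1/2:ℂ)*C2*V y^2)
        (V x * a1 x + (1/2:ℂ)*C2*(2 * V x * deriv V x)) x := h1.add (hsq ((1/2:ℂ)*C2) x)
    convert h using 1
    rw [ha1 x]
    ring
  obtain ⟨C4, hC4def⟩ : ∃ c : ℂ, c = a2 0 + (1/2:ℂ)*C2*V 0^2 := ⟨_, rfl⟩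
  have ha2c : ∀ x, a2 x = -(1/2) * C2 * V x ^ 2 + C4 := by
    intro x
    have h := my_const _ hgd2 x
    rw [hC4def]
    linear_combination h
  -- ODE2
  have hderiv_a1 : ∀ x, deriv a1 x = -C2 * deriv (deriv V) x := by
    intro x
    have h : a1 = fun y => -C2 * deriv V y := funext ha1
    rw [h, deriv_const_mul _ (hV' x)]
  have hODE2 : ∀ x, C2 * (deriv (deriv V) x + (1/2) * V x ^ 3) = C4 * V x := by
    intro x
    have h := e12 x
    rw [hderiv_a1 x, ha2c x] at h
    linear_combination -h
  -- ODE1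
  have hODE1 : ∀ x, C1 * (deriv (deriv (deriv V)) x + (3/2) * V x ^ 2 * deriv V x)
      = C3 * deriv V x := by
    intro x
    have ha3fun : a3 = fun y => -C1 * (deriv (deriv V) y + (1/2) * V y ^ 3) + C3 * V y :=
      funext ha3
    have hVd := (hV x).hasDerivAt
    have hpow : HasDerivAt (fun y => V y ^ 3) (3 * V x ^ 2 * deriv V x) x := by
      have h : HasDerivAt (fun y => V y * V y * V y)
          ((deriv V x * V x + V x * deriv V x) * V x + (V x * V x) * deriv V x) x :=
        (hVd.mul hVd).mul hVd
      have heq : (fun y => V y * V y * V y) = fun y => V y ^ 3 := by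
        funext y; ring
      rw [heq] at h
      convert h using 1
      ring
    have hA : HasDerivAt a3
        (-C1 * (deriv (deriv (deriv V)) x + (1/2:ℂ) * (3 * V x ^ 2 * deriv V x))
          + C3 * deriv V x) x := by
      rw [ha3fun]
      exact (((hV'' x).hasDerivAt.add (hpow.const_mul (1/2:ℂ))).const_mul (-C1)).add
        (hVd.const_mul C3)
    have h := hA.deriv
    rw [e14 x] at h
    linear_combination h
  exact ⟨C1, C2, C3, C4, hd2c, hc1z, hc2c, hc3, hb1, hb2c, hb3, ha1, ha2c, ha3, hODE1, hODE2⟩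
end

section
/- Let a < b be real numbers and let u : [a,b] → ℝ³ be continuously differentiable with u(x) ≠ 0 for every x ∈ [a,b]. Then there exists a continuously differentiable map R : [a,b] → SO(3) (real 3×3 orthogonal matrices of determinant 1) such that R(x)·u(x) = (‖u(x)‖, 0, 0)ᵀ for all x ∈ [a,b]. -/
open Matrix Set
open scoped RealInnerProductSpace NNReal

section Helpers

lemma const_of_hasDerivWithinAt_zero {c d : ℝ} (hcd : c < d) {g : ℝ → ℝ}
    (hg : ∀ t ∈ Icc c d, HasDerivWithinAt g 0 (Icc c d) t) :
    ∀ t ∈ Icc c d, g t = g c := by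
  intro t ht
  have hU := uniqueDiffOn_Icc hcd
  refine (convex_Icc c d).is_const_of_fderivWithin_eq_zero (𝕜 := ℝ)
    (fun x hx => (hg x hx).differentiableWithinAt) (fun x hx => ?_) ht
    (left_mem_Icc.2 hcd.le)
  have h2 := ((hg x hx).hasFDerivWithinAt).fderivWithin (hU x hx)
  rw [h2]
  refine ContinuousLinearMap.ext fun y => ?_
  simp

lemma hasDerivWithinAt_of_nmem_closure' {E : Type*} [NormedAddCommGroup E] [NormedSpace ℝ E]
    {f : ℝ → E} {f' : E} {s : Set ℝ} {x : ℝ} (h : x ∉ closure s) :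
    HasDerivWithinAt f f' s x := by
  have := HasFDerivWithinAt.of_notMem_closure
    (f := f) (f' := ContinuousLinearMap.smulRight (1 : ℝ →L[ℝ] ℝ) f') h
  simpa using this.hasDerivWithinAt

lemma inner_const_of_deriv {E : Type*} [NormedAddCommGroup E] [InnerProductSpace ℝ E]
    {a c : ℝ} (hac : a < c) {r s r' s' : ℝ → E}
    (hr : ∀ t ∈ Icc a c, HasDerivWithinAt r (r' t) (Icc a c) t)
    (hs : ∀ t ∈ Icc a c, HasDerivWithinAt s (s' t) (Icc a c) t)
    (h : ∀ t ∈ Icc a c, ⟪r t, s' t⟫ + ⟪r' t, s t⟫ = 0) :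
    ∀ t ∈ Icc a c, ⟪r t, s t⟫ = ⟪r a, s a⟫ := by
  refine const_of_hasDerivWithinAt_zero hac (fun t ht => ?_)
  have := (hr t ht).inner ℝ (hs t ht)
  rwa [h t ht] at this

lemma global_linear_ode {E : Type*} [NormedAddCommGroup E] [InnerProductSpace ℝ E]
    [CompleteSpace E]
    (f : ℝ → E → E) (a b : ℝ) (hab : a < b) (K : ℝ≥0)
    (hlip : ∀ t ∈ Icc a b, LipschitzWith K (f t))
    (hcont : ∀ y, ContinuousOn (fun t => f t y) (Icc a b))
    (h0 : ∀ t, f t 0 = 0)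
    (hsym : ∀ t ∈ Icc a b, ∀ y : E, ⟪f t y, y⟫ = 0)
    (x₀ : E) :
    ∃ r : ℝ → E, r a = x₀ ∧ ∀ t ∈ Icc a b, HasDerivWithinAt r (f t (r t)) (Icc a b) t := by
  set C : ℝ := ((K : ℝ) + 1) * (‖x₀‖ + 1) with hC
  have hCpos : 0 < C := by positivity
  set N : ℕ := ⌈(b - a) * C⌉₊ with hNdef
  have hNpos : 0 < N := Nat.ceil_pos.2 (mul_pos (by linarith) hCpos)
  have hNR : (0 : ℝ) < N := Nat.cast_pos.2 hNpos
  set Δ : ℝ := (b - a) / N with hΔdef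
  have hΔpos : 0 < Δ := div_pos (by linarith) hNR
  have hCΔ : C * Δ ≤ 1 := by
    rw [hΔdef, mul_div_assoc']
    rw [div_le_one hNR]
    calc C * (b - a) = (b - a) * C := by ring
    _ ≤ N := Nat.le_ceil _
  -- the Picard–Lindelöf step
  have step : ∀ c : ℝ, ∀ y₀ : E, a ≤ c → c + Δ ≤ b → ‖y₀‖ ≤ ‖x₀‖ →
      ∃ s : ℝ → E, s c = y₀ ∧
        ∀ t ∈ Icc c (c + Δ), HasDerivWithinAt s (f t (s t)) (Icc c (c + Δ)) t := by
    intro c y₀ hac hcb hy₀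
    have hsub : Icc c (c + Δ) ⊆ Icc a b := Icc_subset_Icc hac hcb
    have hpl : IsPicardLindelof f (tmin := c) (tmax := c + Δ) ⟨c, left_mem_Icc.2 (by linarith)⟩
        y₀ 1 0 ⟨C, hCpos.le⟩ K := by
      refine ⟨?_, ?_, ?_, ?_⟩
      · exact fun t ht => (hlip t (hsub ht)).lipschitzOnWith
      · exact fun y _ => (hcont y).mono hsub
      · intro t ht y hy
        have h1 : ‖y‖ ≤ ‖y₀‖ + 1 := by
          calc ‖y‖ ≤ ‖y₀‖ + ‖y - y₀‖ := by
                have := norm_sub_norm_le y y₀; linarith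
          _ ≤ ‖y₀‖ + 1 := by
                have : dist y y₀ ≤ 1 := by simpa using Metric.mem_closedBall.1 hy
                rw [dist_eq_norm] at this; linarith
        have h2 : ‖f t y‖ = ‖f t y - f t 0‖ := by rw [h0 t, sub_zero]
        have h3 : ‖f t y - f t 0‖ ≤ K * ‖y - 0‖ := by
          have := (hlip t (hsub ht)).dist_le_mul y 0
          rwa [dist_eq_norm, dist_eq_norm] at this
        show ‖f t y‖ ≤ C
        rw [h2]
        refine h3.trans ?_
        rw [sub_zero]
        have hK1 : (K : ℝ) ≤ (K : ℝ) + 1 := by linarith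
        calc (K : ℝ) * ‖y‖ ≤ ((K : ℝ) + 1) * (‖y₀‖ + 1) := by
              refine mul_le_mul hK1 (h1.trans ?_) (norm_nonneg _) (by positivity)
              linarith
        _ ≤ C := by rw [hC]; nlinarith [norm_nonneg x₀, norm_nonneg y₀]
      · simp only [NNReal.coe_mk, NNReal.coe_one, NNReal.coe_zero, sub_zero]
        rw [add_sub_cancel_left, sub_self, max_eq_left hΔpos.le]
        exact hCΔ
    obtain ⟨s, hs0, hs⟩ := hpl.exists_eq_forall_mem_Icc_hasDerivWithinAt₀
    exact ⟨s, hs0, hs⟩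
  -- norm invariance of solutions
  have inv : ∀ c : ℝ, a < c → c ≤ b → ∀ r : ℝ → E, r a = x₀ →
      (∀ t ∈ Icc a c, HasDerivWithinAt r (f t (r t)) (Icc a c) t) →
      ∀ t ∈ Icc a c, ‖r t‖ = ‖x₀‖ := by
    intro c hac hcb r hr0 hr t ht
    have hconst := inner_const_of_deriv hac hr hr (fun t ht => by
      have h1 := hsym t (Icc_subset_Icc le_rfl hcb ht) (r t)
      rw [real_inner_comm (r t) (f t (r t))] at *
      linarith) t ht
    rw [hr0] at hconst
    rw [real_inner_self_eq_norm_sq, real_inner_self_eq_norm_sq] at hconst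
    rw [← abs_of_nonneg (norm_nonneg (r t)), ← abs_of_nonneg (norm_nonneg x₀),
      ← Real.sqrt_sq_eq_abs, ← Real.sqrt_sq_eq_abs, hconst]
  -- times
  have hT : ∀ k : ℕ, k ≤ N → a + k * Δ ≤ b := by
    intro k hk
    have : (k : ℝ) * Δ ≤ N * Δ := by
      have : (k : ℝ) ≤ N := Nat.cast_le.2 hk
      nlinarith
    have hNΔ : (N : ℝ) * Δ = b - a := by
      rw [hΔdef]; field_simp
    linarith
  -- main induction
  have main : ∀ k : ℕ, 1 ≤ k → k ≤ N →
      ∃ r : ℝ → E, r a = x₀ ∧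
        ∀ t ∈ Icc a (a + k * Δ), HasDerivWithinAt r (f t (r t)) (Icc a (a + k * Δ)) t := by
    intro k
    induction k with
    | zero => omega
    | succ n ih =>
      intro _ hkN
      by_cases hn : n = 0
      · subst hn
        obtain ⟨s, hs0, hs⟩ := step a x₀ le_rfl (by simpa using hT 1 hkN) le_rfl
        refine ⟨s, hs0, ?_⟩
        push_cast
        rw [one_mul]
        exact hs
      · have hn1 : 1 ≤ n := Nat.one_le_iff_ne_zero.2 hn
        obtain ⟨r, hr0, hr⟩ := ih hn1 (Nat.le_of_succ_le hkN)
        set c : ℝ := a + n * Δ with hcdef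
        have hac : a < c := by
          have : (1 : ℝ) ≤ (n : ℝ) := by exact_mod_cast hn1
          rw [hcdef]; nlinarith
        have hcb : c + Δ ≤ b := by
          have := hT (n + 1) hkN
          push_cast at this
          rw [hcdef]; linarith
        have hrc : ‖r c‖ = ‖x₀‖ :=
          inv c hac (by linarith) r hr0 hr c (right_mem_Icc.2 hac.le)
        obtain ⟨s, hs0, hs⟩ := step c (r c) hac.le hcb hrc.le
        set d : ℝ := c + Δ with hddef
        have hkd : a + ((n : ℕ) + 1 : ℕ) * Δ = d := by
          rw [hddef, hcdef]; push_cast; ring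
        rw [hkd]
        set G : ℝ → E := fun t => if t ≤ c then r t else s t with hGdef
        have hGle : ∀ y, y ≤ c → G y = r y := fun y hy => if_pos hy
        have hGgt : ∀ y, ¬ y ≤ c → G y = s y := fun y hy => if_neg hy
        have hGc : G c = s c := by rw [hGle c le_rfl, ← hs0]
        have hGs : ∀ y ∈ Icc c d, G y = s y := by
          intro y hy
          by_cases hyc : y ≤ c
          · have hyec : y = c := le_antisymm hyc hy.1
            rw [hyec]; exact hGc
          · exact hGgt y hyc
        refine ⟨G, by rw [hGle a hac.le]; exact hr0, ?_⟩
        intro t ht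
        have hsplit : Icc a d = Icc a c ∪ Icc c d :=
          (Icc_union_Icc_eq_Icc hac.le (by rw [hddef]; linarith)).symm
        rw [hsplit]
        by_cases htc : t ≤ c
        · have htIcc : t ∈ Icc a c := ⟨ht.1, htc⟩
          have hleft : HasDerivWithinAt G (f t (G t)) (Icc a c) t := by
            rw [hGle t htc]
            exact (hr t htIcc).congr (fun y hy => hGle y hy.2) (hGle t htc)
          refine hleft.union ?_
          rcases lt_or_eq_of_le htc with hlt | heq
          · refine hasDerivWithinAt_of_nmem_closure' ?_
            rw [IsClosed.closure_eq isClosed_Icc]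
            exact fun hmem => absurd hmem.1 (not_le.2 hlt)
          · have htmem : t ∈ Icc c d := by
              rw [heq]; exact left_mem_Icc.2 (by rw [hddef]; linarith)
            have hGt : G t = s t := hGs t htmem
            rw [hGt]
            exact (hs t htmem).congr hGs hGt
        · have hct : c < t := not_le.1 htc
          have htmem : t ∈ Icc c d := ⟨hct.le, ht.2⟩
          have hright : HasDerivWithinAt G (f t (G t)) (Icc c d) t := by
            rw [hGs t htmem]
            exact (hs t htmem).congr hGs (hGs t htmem)
          refine HasDerivWithinAt.union ?_ hright
          refine hasDerivWithinAt_of_nmem_closure' ?_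
          rw [IsClosed.closure_eq isClosed_Icc]
          exact fun hmem => absurd hmem.2 (not_le.2 hct)
  obtain ⟨r, hr0, hr⟩ := main N hNpos le_rfl
  have hNb : a + N * Δ = b := by
    rw [hΔdef]; field_simp; ring
  rw [hNb] at hr
  exact ⟨r, hr0, hr⟩

lemma euclid_inner_coords (y z : EuclideanSpace ℝ (Fin 3)) :
    ⟪y, z⟫ = y 0 * z 0 + y 1 * z 1 + y 2 * z 2 := by
  simp [PiLp.inner_apply, RCLike.inner_apply, Fin.sum_univ_three]; ring

lemma exists_unit_orthogonal (v : EuclideanSpace ℝ (Fin 3)) (hv : v ≠ 0) :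
    ∃ q : EuclideanSpace ℝ (Fin 3), ‖q‖ = 1 ∧ ⟪v, q⟫ = 0 := by
  haveI : Fact (Module.finrank ℝ (EuclideanSpace ℝ (Fin 3)) = 2 + 1) := ⟨by simp⟩
  have hdim : Module.finrank ℝ ((ℝ ∙ v)ᗮ) = 2 := Submodule.finrank_orthogonal_span_singleton hv
  haveI : Nontrivial ((ℝ ∙ v)ᗮ) := Module.finrank_pos_iff.mp (by rw [hdim]; norm_num)
  obtain ⟨x, hx⟩ := exists_ne (0 : (ℝ ∙ v)ᗮ)
  have hx0 : (x : EuclideanSpace ℝ (Fin 3)) ≠ 0 := by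
    simpa [Submodule.coe_eq_zero] using hx
  refine ⟨‖(x : EuclideanSpace ℝ (Fin 3))‖⁻¹ • (x : EuclideanSpace ℝ (Fin 3)), ?_, ?_⟩
  · rw [norm_smul, norm_inv, norm_norm, inv_mul_cancel₀ (norm_ne_zero_iff.2 hx0)]
  · rw [real_inner_smul_right]
    have := x.2 v (Submodule.mem_span_singleton_self v)
    rw [this, mul_zero]

end Helpers

/-- Normal-form step of Lemma 1: a `C¹` nonvanishing curve `u : [a,b] → ℝ³` can be rotated
by a `C¹` family of rotations `R(x) ∈ SO(3)` to the form `R(x)u(x) = (‖u(x)‖, 0, 0)ᵀ`. -/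
theorem rotate_nonvanishing_curve_to_axis
    (a b : ℝ) (hab : a < b)
    (u : ℝ → EuclideanSpace ℝ (Fin 3))
    (hu : ContDiffOn ℝ 1 u (Icc a b))
    (hu0 : ∀ x ∈ Icc a b, u x ≠ 0) :
    ∃ R : ℝ → Matrix (Fin 3) (Fin 3) ℝ,
      (∀ i j, ContDiffOn ℝ 1 (fun x => R x i j) (Icc a b)) ∧
      (∀ x ∈ Icc a b, (R x)ᵀ * R x = 1 ∧ (R x).det = 1) ∧
      (∀ x ∈ Icc a b,
        R x *ᵥ (WithLp.equiv 2 (Fin 3 → ℝ) (u x)) = ![‖u x‖, 0, 0]) := by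
  have hIccU := uniqueDiffOn_Icc hab
  have haIcc : a ∈ Icc a b := left_mem_Icc.2 hab.le
  have hn0 : ∀ x ∈ Icc a b, ‖u x‖ ≠ 0 := fun x hx => norm_ne_zero_iff.2 (hu0 x hx)
  have hncd : ContDiffOn ℝ 1 (fun x => ‖u x‖) (Icc a b) := hu.norm ℝ hu0
  set v : ℝ → EuclideanSpace ℝ (Fin 3) := fun x => (‖u x‖)⁻¹ • u x with hvdef
  have hvcd : ContDiffOn ℝ 1 v (Icc a b) := (hncd.inv hn0).smul hu
  have hvn : ∀ x ∈ Icc a b, ‖v x‖ = 1 := by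
    intro x hx
    rw [hvdef]
    simp only [norm_smul, norm_inv, norm_norm]
    exact inv_mul_cancel₀ (hn0 x hx)
  have hvv : ∀ x ∈ Icc a b, ⟪v x, v x⟫ = 1 := by
    intro x hx
    rw [real_inner_self_eq_norm_sq, hvn x hx, one_pow]
  -- derivative of v
  set w : ℝ → EuclideanSpace ℝ (Fin 3) := derivWithin v (Icc a b) with hwdef
  have hw : ∀ t ∈ Icc a b, HasDerivWithinAt v (w t) (Icc a b) t := fun t ht =>
    ((hvcd.differentiableOn one_ne_zero) t ht).hasDerivWithinAt
  have hwc : ContinuousOn w (Icc a b) := hvcd.continuousOn_derivWithin hIccU le_rfl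
  have hvw : ∀ t ∈ Icc a b, ⟪v t, w t⟫ = 0 := by
    intro t ht
    have h1 : HasDerivWithinAt (fun t => ⟪v t, v t⟫) (⟪v t, w t⟫ + ⟪w t, v t⟫) (Icc a b) t :=
      (hw t ht).inner ℝ (hw t ht)
    have h2 : HasDerivWithinAt (fun t => ⟪v t, v t⟫) 0 (Icc a b) t :=
      (hasDerivWithinAt_const t _ 1).congr (fun y hy => hvv y hy) (hvv t ht)
    have h3 := h1.derivWithin (hIccU t ht)
    have h4 := h2.derivWithin (hIccU t ht)
    rw [h4] at h3
    have h5 : ⟪w t, v t⟫ = ⟪v t, w t⟫ := real_inner_comm _ _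
    rw [h5] at h3
    linarith
  -- a bound for w
  obtain ⟨M, hM⟩ := (isCompact_Icc (a := a) (b := b)).exists_bound_of_continuousOn hwc
  have hM0 : 0 ≤ M := le_trans (norm_nonneg (w a)) (hM a haIcc)
  set K : ℝ≥0 := ⟨2 * M + 1, by positivity⟩ with hKdef
  -- the ODE vector field
  set f : ℝ → EuclideanSpace ℝ (Fin 3) → EuclideanSpace ℝ (Fin 3) :=
    fun t y => ⟪v t, y⟫ • w t - ⟪w t, y⟫ • v t with hfdef
  have hlip : ∀ t ∈ Icc a b, LipschitzWith K (f t) := by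
    intro t ht
    refine LipschitzWith.of_dist_le_mul fun y z => ?_
    rw [dist_eq_norm, dist_eq_norm]
    have hdiff : f t y - f t z = ⟪v t, y - z⟫ • w t - ⟪w t, y - z⟫ • v t := by
      rw [hfdef]
      simp only [inner_sub_right, sub_smul]
      abel
    rw [hdiff]
    have h1 : ‖⟪v t, y - z⟫ • w t - ⟪w t, y - z⟫ • v t‖ ≤
        ‖⟪v t, y - z⟫ • w t‖ + ‖⟪w t, y - z⟫ • v t‖ := norm_sub_le _ _
    rw [norm_smul, norm_smul] at h1
    have h2 : |⟪v t, y - z⟫| ≤ ‖v t‖ * ‖y - z‖ := abs_real_inner_le_norm _ _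
    have h3 : |⟪w t, y - z⟫| ≤ ‖w t‖ * ‖y - z‖ := abs_real_inner_le_norm _ _
    have h4 : ‖v t‖ = 1 := hvn t ht
    have h5 : ‖w t‖ ≤ M := hM t ht
    have h6 : (K : ℝ) = 2 * M + 1 := rfl
    rw [h4] at h2
    rw [Real.norm_eq_abs, Real.norm_eq_abs] at h1
    have h7 : ‖y - z‖ ≥ 0 := norm_nonneg _
    have h8 : ‖w t‖ ≥ 0 := norm_nonneg _
    have h9 : |⟪w t, y - z⟫| ≥ 0 := abs_nonneg _
    calc ‖⟪v t, y - z⟫ • w t - ⟪w t, y - z⟫ • v t‖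
        ≤ |⟪v t, y - z⟫| * ‖w t‖ + |⟪w t, y - z⟫| * ‖v t‖ := h1
      _ ≤ (K : ℝ) * ‖y - z‖ := by rw [h4, h6]; nlinarith
  have hcont : ∀ y, ContinuousOn (fun t => f t y) (Icc a b) := by
    intro y
    exact ((hvcd.continuousOn.inner (𝕜 := ℝ) continuousOn_const).smul hwc).sub
      ((hwc.inner (𝕜 := ℝ) continuousOn_const).smul hvcd.continuousOn)
  have hf0 : ∀ t, f t 0 = 0 := by
    intro t
    rw [hfdef]
    simp
  have hsym : ∀ t ∈ Icc a b, ∀ y : EuclideanSpace ℝ (Fin 3), ⟪f t y, y⟫ = 0 := by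
    intro t ht y
    rw [hfdef]
    simp only [inner_sub_left, real_inner_smul_left]
    ring
  -- initial orthogonal vector
  have hva0 : v a ≠ 0 := by
    intro h
    have := hvn a haIcc
    rw [h, norm_zero] at this
    norm_num at this
  obtain ⟨q₀, hq₀n, hq₀v⟩ := exists_unit_orthogonal (v a) hva0
  -- solve the ODE
  obtain ⟨r, hr0, hr⟩ := global_linear_ode f a b hab K hlip hcont hf0 hsym q₀
  -- invariants
  have hrr : ∀ t ∈ Icc a b, ⟪r t, r t⟫ = 1 := by
    have hkey := inner_const_of_deriv hab hr hr (fun t ht => by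
      have h1 := hsym t ht (r t)
      have h2 : ⟪r t, f t (r t)⟫ = ⟪f t (r t), r t⟫ := real_inner_comm _ _
      rw [h2, h1]
      ring)
    intro t ht
    rw [hkey t ht, hr0, real_inner_self_eq_norm_sq, hq₀n, one_pow]
  have hvr : ∀ t ∈ Icc a b, ⟪v t, r t⟫ = 0 := by
    have hkey := inner_const_of_deriv hab hw hr (fun t ht => by
      have h1 : ⟪v t, f t (r t)⟫ =
          ⟪v t, r t⟫ * ⟪v t, w t⟫ - ⟪w t, r t⟫ * ⟪v t, v t⟫ := by
        rw [hfdef]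
        simp only [inner_sub_right, real_inner_smul_right]
        try ring
      rw [h1, hvw t ht, hvv t ht]
      try ring)
    intro t ht
    rw [hkey t ht, hr0, hq₀v]
  -- C¹ regularity of r
  have hrcont : ContinuousOn r (Icc a b) := fun t ht =>
    ((hr t ht).differentiableWithinAt).continuousWithinAt
  have hrderiv : ∀ t ∈ Icc a b, derivWithin r (Icc a b) t = f t (r t) := fun t ht =>
    (hr t ht).derivWithin (hIccU t ht)
  have hrcd : ContDiffOn ℝ 1 r (Icc a b) := by
    have h1 : ContDiffOn ℝ ((0 : WithTop ℕ∞) + 1) r (Icc a b) := by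
      rw [contDiffOn_succ_iff_derivWithin hIccU]
      refine ⟨fun t ht => (hr t ht).differentiableWithinAt, by simp, ?_⟩
      rw [contDiffOn_zero]
      refine ContinuousOn.congr ?_ hrderiv
      exact ((hvcd.continuousOn.inner (𝕜 := ℝ) hrcont).smul hwc).sub
        ((hwc.inner (𝕜 := ℝ) hrcont).smul hvcd.continuousOn)
    simpa using h1
  -- coordinates
  have hPj : ∀ j : Fin 3, ContDiffOn ℝ 1 (fun x => v x j) (Icc a b) := by
    intro j
    have := (EuclideanSpace.proj (𝕜 := ℝ) (ι := Fin 3) j).contDiff.comp_contDiffOn hvcd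
    exact this
  have hQj : ∀ j : Fin 3, ContDiffOn ℝ 1 (fun x => r x j) (Icc a b) := by
    intro j
    have := (EuclideanSpace.proj (𝕜 := ℝ) (ι := Fin 3) j).contDiff.comp_contDiffOn hrcd
    exact this
  -- the rotation matrix
  refine ⟨fun x => Matrix.of
    ![![v x 0, v x 1, v x 2],
      ![r x 0, r x 1, r x 2],
      ![v x 1 * r x 2 - v x 2 * r x 1,
        v x 2 * r x 0 - v x 0 * r x 2,
        v x 0 * r x 1 - v x 1 * r x 0]], ?_, ?_, ?_⟩
  · -- smoothness of entries
    intro i j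
    fin_cases i <;> fin_cases j <;>
      simp only [Matrix.of_apply, Matrix.cons_val', Matrix.cons_val_zero, Matrix.cons_val_one,
        Matrix.head_cons, Matrix.empty_val', Matrix.cons_val_fin_one, Matrix.head_fin_const,
        Matrix.cons_val_two, Matrix.tail_cons] <;>
      first
        | exact hPj _
        | exact hQj _
        | exact ((hPj _).mul (hQj _)).sub ((hPj _).mul (hQj _))
  · -- orthogonality and determinant
    intro x hx
    have hp : v x 0 * v x 0 + v x 1 * v x 1 + v x 2 * v x 2 = 1 := by
      have := hvv x hx
      rwa [euclid_inner_coords] at this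
    have hq : r x 0 * r x 0 + r x 1 * r x 1 + r x 2 * r x 2 = 1 := by
      have := hrr x hx
      rwa [euclid_inner_coords] at this
    have hpq : v x 0 * r x 0 + v x 1 * r x 1 + v x 2 * r x 2 = 0 := by
      have := hvr x hx
      rwa [euclid_inner_coords] at this
    constructor
    · rw [mul_eq_one_comm]
      ext i j
      fin_cases i <;> fin_cases j <;>
        simp [Matrix.mul_apply, Fin.sum_univ_three, Matrix.one_apply, Matrix.transpose,
          Matrix.of_apply] <;>
        first
          | linear_combination hp
          | linear_combination hpq
          | linear_combination hq
          | linear_combination (r x 0 * r x 0 + r x 1 * r x 1 + r x 2 * r x 2) * hp + hq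
              - (v x 0 * r x 0 + v x 1 * r x 1 + v x 2 * r x 2) * hpq
          | linear_combination
    · rw [Matrix.det_fin_three]
      simp only [Matrix.of_apply, Matrix.cons_val', Matrix.cons_val_zero, Matrix.cons_val_one,
        Matrix.head_cons, Matrix.empty_val', Matrix.cons_val_fin_one, Matrix.head_fin_const,
        Matrix.cons_val_two, Matrix.tail_cons]
      linear_combination (r x 0 * r x 0 + r x 1 * r x 1 + r x 2 * r x 2) * hp + hq
        - (v x 0 * r x 0 + v x 1 * r x 1 + v x 2 * r x 2) * hpq
  · -- the rotation maps u to the axis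
    intro x hx
    have hup : ∀ j : Fin 3, (WithLp.equiv 2 (Fin 3 → ℝ) (u x)) j = ‖u x‖ * v x j := by
      intro j
      have h1 : v x j = (‖u x‖)⁻¹ * u x j := rfl
      have h2 : (WithLp.equiv 2 (Fin 3 → ℝ) (u x)) j = u x j := rfl
      rw [h2, h1, ← mul_assoc, mul_inv_cancel₀ (hn0 x hx), one_mul]
    have hpq : v x 0 * r x 0 + v x 1 * r x 1 + v x 2 * r x 2 = 0 := by
      have := hvr x hx
      rwa [euclid_inner_coords] at this
    have hp : v x 0 * v x 0 + v x 1 * v x 1 + v x 2 * v x 2 = 1 := by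
      have := hvv x hx
      rwa [euclid_inner_coords] at this
    funext i
    fin_cases i <;>
      simp [Matrix.mulVec, dotProduct, Fin.sum_univ_three, hup] <;>
      first
        | linear_combination ‖u x‖ * hp
        | linear_combination ‖u x‖ * hpq
        | linear_combination
end

section
/- Let n ∈ ℕ, let J₁, J₂, J₃ be linearly independent 4×4 complex matrices satisfying [J₁,J₂] = J₃, [J₂,J₃] = J₁, [J₃,J₁] = J₂, let V : ℝ → ℂ be differentiable, and let f_a^k : ℝ → ℂ (a = 1,2,3; k = 0,…,n) be differentiable. For m ∈ ℂ set Q(x,m) = Σ_{k=0}^{n} Σ_{a=1}^{3} f_a^k(x) J_a m^{n−k}. Then the symmetry condition ∂Q/∂x (x,m) = V(x)[J₃, Q(x,m)] + m[J₂, Q(x,m)] holds for all x ∈ ℝ and all m ∈ ℂ if and only if: f₁⁰ = 0, f₃⁰ = 0; for each k = 0,…,n−1: (f₁^k)' = −V·f₂^k + f₃^{k+1}, (f₂^k)' = V·f₁^k, (f₃^k)' = −f₁^{k+1}; and (f₁^n)' = −V·f₂^n, (f₂^n)' = V·f₁^n, (f₃^n)' = 0 identically on ℝ. -/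
open Matrix Finset Polynomial

lemma lemB (J1 J2 J3 : Matrix (Fin 4) (Fin 4) ℂ)
    (hind : LinearIndependent ℂ ![J1, J2, J3]) (a b c : ℂ)
    (h : a • J1 + b • J2 + c • J3 = 0) : a = 0 ∧ b = 0 ∧ c = 0 := by
  have := (Fintype.linearIndependent_iff.mp hind) ![a, b, c] (by
    simpa [Fin.sum_univ_three, add_assoc] using h)
  exact ⟨this 0, this 1, this 2⟩

lemma comm3 (J1 J2 J3 : Matrix (Fin 4) (Fin 4) ℂ)
    (h23 : J2 * J3 - J3 * J2 = J1) (h31 : J3 * J1 - J1 * J3 = J2) (a b c : ℂ) :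
    J3 * (a • J1 + b • J2 + c • J3) - (a • J1 + b • J2 + c • J3) * J3
      = a • J2 - b • J1 := by
  have e1 : J3 * J1 = J2 + J1 * J3 := by rw [← h31]; abel
  have e2 : J3 * J2 = J2 * J3 - J1 := by rw [← h23]; abel
  simp only [mul_add, add_mul, mul_smul_comm, smul_mul_assoc, e1, e2, smul_add, smul_sub]
  abel

lemma comm2 (J1 J2 J3 : Matrix (Fin 4) (Fin 4) ℂ)
    (h12 : J1 * J2 - J2 * J1 = J3) (h23 : J2 * J3 - J3 * J2 = J1) (a b c : ℂ) :
    J2 * (a • J1 + b • J2 + c • J3) - (a • J1 + b • J2 + c • J3) * J2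
      = c • J1 - a • J3 := by
  have e1 : J2 * J1 = J1 * J2 - J3 := by rw [← h12]; abel
  have e2 : J2 * J3 = J1 + J3 * J2 := by rw [← h23]; abel
  simp only [mul_add, add_mul, mul_smul_comm, smul_mul_assoc, e1, e2, smul_add, smul_sub]
  abel


lemma lemA (N : ℕ) (a b : ℕ → ℂ)
    (h : ∀ m : ℂ, ∑ k ∈ Finset.range (N+1), (a k * m ^ k + b k * m ^ (k+1)) = 0) :
    a 0 = 0 ∧ (∀ k < N, a (k+1) + b k = 0) ∧ b N = 0 := by
  set p : ℂ[X] := ∑ k ∈ Finset.range (N+1), (C (a k) * X^k + C (b k) * X^(k+1)) with hp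
  have hev : ∀ m : ℂ, p.eval m = 0 := by
    intro m
    simpa [hp, Polynomial.eval_finset_sum] using h m
  have hp0 : p = 0 := Polynomial.zero_of_eval_zero p hev
  have hc : ∀ j, (∑ k ∈ Finset.range (N+1),
      ((if j = k then a k else 0) + (if j = k+1 then b k else 0))) = 0 := by
    intro j
    have := congrArg (fun q => Polynomial.coeff q j) hp0
    simpa [hp, Polynomial.finset_sum_coeff, Polynomial.coeff_X_pow] using this
  refine ⟨?_, ?_, ?_⟩
  · have := hc 0
    simpa [Finset.sum_ite_eq', Finset.mem_range] using this
  · intro k hk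
    have := hc (k+1)
    have h1 : ∀ x ∈ Finset.range (N+1),
        ((if k+1 = x then a x else 0) + (if k+1 = x+1 then b x else 0))
        = (if k+1 = x then a x else 0) + (if k = x then b x else 0) := by
      intro x _
      by_cases h1 : x = k+1 <;> by_cases h2 : x = k <;> simp [h1, h2] <;> omega
    rw [Finset.sum_congr rfl h1, Finset.sum_add_distrib] at this
    simpa [Finset.sum_ite_eq', Finset.mem_range, Nat.lt_succ, hk.le, hk] using this
  · have := hc (N+1)
    have h1 : ∀ x ∈ Finset.range (N+1),
        ((if N+1 = x then a x else 0) + (if N+1 = x+1 then b x else 0))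
        = (if N = x then b x else 0) := by
      intro x hx
      simp only [Finset.mem_range] at hx
      by_cases h2 : x = N <;> simp [h2] <;> omega
    rw [Finset.sum_congr rfl h1] at this
    simpa [Finset.sum_ite_eq', Finset.mem_range] using this

lemma reflectAB (n : ℕ) (u v : ℕ → ℂ) (m : ℂ) :
    ∑ k ∈ Finset.range (n+1), (u k * m^(n-k) + v k * m^(n-k+1))
      = ∑ k ∈ Finset.range (n+1), (u (n-k) * m^k + v (n-k) * m^(k+1)) := by
  rw [← Finset.sum_range_reflect (fun k => u (n-k) * m^k + v (n-k) * m^(k+1)) (n+1)]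
  refine Finset.sum_congr rfl fun k hk => ?_
  simp only [Finset.mem_range, Nat.lt_succ_iff] at hk
  have h1 : n + 1 - 1 - k = n - k := by omega
  have h2 : n - (n - k) = k := Nat.sub_sub_self hk
  simp only [h1, h2]

lemma extract (n : ℕ) (u v : ℕ → ℂ)
    (h : ∀ m : ℂ, ∑ k ∈ Finset.range (n+1), (u k * m^(n-k) + v k * m^(n-k+1)) = 0) :
    u n = 0 ∧ (∀ j < n, u j + v (j+1) = 0) ∧ v 0 = 0 := by
  have H := lemA n (fun j => u (n-j)) (fun j => v (n-j))
    (fun m => by rw [← reflectAB]; exact h m)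
  obtain ⟨h0, hmid, hlast⟩ := H
  refine ⟨by simpa using h0, ?_, by simpa using hlast⟩
  intro j hj
  have := hmid (n-1-j) (by omega)
  have e1 : n - (n-1-j+1) = j := by omega
  have e2 : n - (n-1-j) = j+1 := by omega
  simp only [e1, e2] at this
  exact this

lemma telescope (n : ℕ) (u v : ℕ → ℂ) (m : ℂ)
    (hun : u n = 0) (hmid : ∀ j < n, u j + v (j+1) = 0) (hv0 : v 0 = 0) :
    ∑ k ∈ Finset.range (n+1), (u k * m^(n-k) + v k * m^(n-k+1)) = 0 := by
  set g : ℕ → ℂ := fun k => if k ≤ n then -(v k) * m^(n+1-k) else 0 with hg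
  have hterm : ∀ k ∈ Finset.range (n+1), u k * m^(n-k) + v k * m^(n-k+1) = g (k+1) - g k := by
    intro k hk
    simp only [Finset.mem_range, Nat.lt_succ_iff] at hk
    rcases eq_or_lt_of_le hk with rfl | hk'
    · have e1 : k + 1 - k = 1 := by omega
      simp only [hg, hun]
      rw [if_neg (by omega), if_pos le_rfl]
      simp only [Nat.sub_self, e1]
      ring
    · have hu : u k = -(v (k+1)) := by
        have h' := hmid k hk'
        linear_combination h'
      have e1 : n + 1 - (k+1) = n - k := by omega
      have e2 : n + 1 - k = n - k + 1 := by omega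
      simp only [hg]
      rw [if_pos (by omega), if_pos (by omega), e1, e2, hu]
      ring
  rw [Finset.sum_congr rfl hterm, Finset.sum_range_sub]
  simp only [hg]
  rw [if_neg (by omega), if_pos (by omega), hv0]
  ring

set_option maxHeartbeats 1000000 in
/-- For the symmetry ansatz `Q(x,m) = Σ_{k=0}^{n} Σ_{a=1}^{3} f_a^k(x) J_a m^{n-k}` of
arbitrary degree `n` in the mass `m`, the symmetry condition
`∂Q/∂x = V[J₃,Q] + m[J₂,Q]` holds for all `x ∈ ℝ`, `m ∈ ℂ` iff the general system of
determining equations holds identically on `ℝ`. -/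
theorem determining_equations_general_degree_iff
    (n : ℕ)
    (J1 J2 J3 : Matrix (Fin 4) (Fin 4) ℂ)
    (hind : LinearIndependent ℂ ![J1, J2, J3])
    (h12 : J1 * J2 - J2 * J1 = J3)
    (h23 : J2 * J3 - J3 * J2 = J1)
    (h31 : J3 * J1 - J1 * J3 = J2)
    (V : ℝ → ℂ) (hV : Differentiable ℝ V)
    (f1 f2 f3 : ℕ → ℝ → ℂ)
    (hf1 : ∀ k ≤ n, Differentiable ℝ (f1 k))
    (hf2 : ∀ k ≤ n, Differentiable ℝ (f2 k))
    (hf3 : ∀ k ≤ n, Differentiable ℝ (f3 k))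
    (Q : ℝ → ℂ → Matrix (Fin 4) (Fin 4) ℂ)
    (hQ : ∀ x m, Q x m = ∑ k ∈ Finset.range (n + 1),
        ((f1 k x * m ^ (n - k)) • J1 + (f2 k x * m ^ (n - k)) • J2
          + (f3 k x * m ^ (n - k)) • J3)) :
    (∀ (x : ℝ) (m : ℂ) (i j : Fin 4),
        HasDerivAt (fun y => Q y m i j)
          ((V x • (J3 * Q x m - Q x m * J3) + m • (J2 * Q x m - Q x m * J2)) i j) x)
      ↔ ((∀ x, f1 0 x = 0) ∧ (∀ x, f3 0 x = 0)
        ∧ (∀ k < n, ∀ x,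
            deriv (f1 k) x = -V x * f2 k x + f3 (k + 1) x)
        ∧ (∀ k < n, ∀ x, deriv (f2 k) x = V x * f1 k x)
        ∧ (∀ k < n, ∀ x, deriv (f3 k) x = -f1 (k + 1) x)
        ∧ (∀ x, deriv (f1 n) x = -V x * f2 n x)
        ∧ (∀ x, deriv (f2 n) x = V x * f1 n x)
        ∧ (∀ x, deriv (f3 n) x = 0)) := by
  -- RHS identity
  have hRHS : ∀ (x : ℝ) (m : ℂ),
      V x • (J3 * Q x m - Q x m * J3) + m • (J2 * Q x m - Q x m * J2)
      = ∑ k ∈ Finset.range (n+1),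
        (((-(V x) * f2 k x) * m^(n-k) + f3 k x * m^(n-k+1)) • J1
         + ((V x * f1 k x) * m^(n-k)) • J2
         + (-(f1 k x * m^(n-k+1))) • J3) := by
    intro x m
    rw [hQ]
    simp only [Finset.mul_sum, Finset.sum_mul, ← Finset.sum_sub_distrib, Finset.smul_sum]
    rw [← Finset.sum_add_distrib]
    refine Finset.sum_congr rfl fun k hk => ?_
    rw [comm3 J1 J2 J3 h23 h31, comm2 J1 J2 J3 h12 h23]
    module
  -- derivative of entries
  have hD : ∀ (x : ℝ) (m : ℂ) (i j : Fin 4),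
      HasDerivAt (fun y => Q y m i j)
        ((∑ k ∈ Finset.range (n+1),
          ((deriv (f1 k) x * m^(n-k)) • J1 + (deriv (f2 k) x * m^(n-k)) • J2
            + (deriv (f3 k) x * m^(n-k)) • J3)) i j) x := by
    intro x m i j
    have hfun : (fun y => Q y m i j) = fun y => ∑ k ∈ Finset.range (n+1),
        (f1 k y * m^(n-k) * J1 i j + f2 k y * m^(n-k) * J2 i j
          + f3 k y * m^(n-k) * J3 i j) := by
      funext y
      rw [hQ]
      simp [Matrix.sum_apply]
    have hval : (∑ k ∈ Finset.range (n+1),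
          ((deriv (f1 k) x * m^(n-k)) • J1 + (deriv (f2 k) x * m^(n-k)) • J2
            + (deriv (f3 k) x * m^(n-k)) • J3)) i j
        = ∑ k ∈ Finset.range (n+1),
          (deriv (f1 k) x * m^(n-k) * J1 i j + deriv (f2 k) x * m^(n-k) * J2 i j
            + deriv (f3 k) x * m^(n-k) * J3 i j) := by
      simp [Matrix.sum_apply]
    rw [hfun, hval]
    apply HasDerivAt.fun_sum
    intro k hk
    have hk' : k ≤ n := Finset.mem_range_succ_iff.mp hk
    exact ((((hf1 k hk' x).hasDerivAt.mul_const _).mul_const _).add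
        (((hf2 k hk' x).hasDerivAt.mul_const _).mul_const _)).add
        (((hf3 k hk' x).hasDerivAt.mul_const _).mul_const _)
  -- difference identity
  have hdiff : ∀ (x : ℝ) (m : ℂ),
      (∑ k ∈ Finset.range (n+1),
          ((deriv (f1 k) x * m^(n-k)) • J1 + (deriv (f2 k) x * m^(n-k)) • J2
            + (deriv (f3 k) x * m^(n-k)) • J3))
      - (∑ k ∈ Finset.range (n+1),
        (((-(V x) * f2 k x) * m^(n-k) + f3 k x * m^(n-k+1)) • J1
         + ((V x * f1 k x) * m^(n-k)) • J2
         + (-(f1 k x * m^(n-k+1))) • J3))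
      = (∑ k ∈ Finset.range (n+1),
          ((deriv (f1 k) x + V x * f2 k x) * m^(n-k) + (-(f3 k x)) * m^(n-k+1))) • J1
        + (∑ k ∈ Finset.range (n+1),
          ((deriv (f2 k) x - V x * f1 k x) * m^(n-k) + 0 * m^(n-k+1))) • J2
        + (∑ k ∈ Finset.range (n+1),
          ((deriv (f3 k) x) * m^(n-k) + (f1 k x) * m^(n-k+1))) • J3 := by
    intro x m
    rw [← Finset.sum_sub_distrib]
    have hterm : ∀ k ∈ Finset.range (n+1),
        ((deriv (f1 k) x * m^(n-k)) • J1 + (deriv (f2 k) x * m^(n-k)) • J2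
            + (deriv (f3 k) x * m^(n-k)) • J3)
        - (((-(V x) * f2 k x) * m^(n-k) + f3 k x * m^(n-k+1)) • J1
         + ((V x * f1 k x) * m^(n-k)) • J2
         + (-(f1 k x * m^(n-k+1))) • J3)
        = ((deriv (f1 k) x + V x * f2 k x) * m^(n-k) + (-(f3 k x)) * m^(n-k+1)) • J1
          + ((deriv (f2 k) x - V x * f1 k x) * m^(n-k) + 0 * m^(n-k+1)) • J2
          + ((deriv (f3 k) x) * m^(n-k) + (f1 k x) * m^(n-k+1)) • J3 := by
      intro k _
      module
    rw [Finset.sum_congr rfl hterm, Finset.sum_add_distrib, Finset.sum_add_distrib,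
        ← Finset.sum_smul, ← Finset.sum_smul, ← Finset.sum_smul]
  -- key equivalence
  have key : ∀ (x : ℝ) (m : ℂ),
      ((∑ k ∈ Finset.range (n+1),
          ((deriv (f1 k) x * m^(n-k)) • J1 + (deriv (f2 k) x * m^(n-k)) • J2
            + (deriv (f3 k) x * m^(n-k)) • J3))
        = (∑ k ∈ Finset.range (n+1),
        (((-(V x) * f2 k x) * m^(n-k) + f3 k x * m^(n-k+1)) • J1
         + ((V x * f1 k x) * m^(n-k)) • J2
         + (-(f1 k x * m^(n-k+1))) • J3)))
      ↔ ((∑ k ∈ Finset.range (n+1),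
          ((deriv (f1 k) x + V x * f2 k x) * m^(n-k) + (-(f3 k x)) * m^(n-k+1))) = 0
        ∧ (∑ k ∈ Finset.range (n+1),
          ((deriv (f2 k) x - V x * f1 k x) * m^(n-k) + 0 * m^(n-k+1))) = 0
        ∧ (∑ k ∈ Finset.range (n+1),
          ((deriv (f3 k) x) * m^(n-k) + (f1 k x) * m^(n-k+1))) = 0) := by
    intro x m
    constructor
    · intro h
      have h0 := hdiff x m
      rw [h, sub_self] at h0
      exact lemB J1 J2 J3 hind _ _ _ h0.symm
    · rintro ⟨h1, h2, h3⟩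
      have h0 := hdiff x m
      rw [h1, h2, h3] at h0
      simp only [zero_smul, add_zero] at h0
      exact sub_eq_zero.mp h0
  constructor
  · intro h
    have hDR : ∀ (x : ℝ) (m : ℂ), _ := fun x m => (key x m).mp (by
      ext i j
      have h' := h x m i j
      rw [hRHS x m] at h'
      exact (hD x m i j).unique h')
    have E1 := fun x => extract n (fun k => deriv (f1 k) x + V x * f2 k x)
      (fun k => -(f3 k x)) (fun m => (hDR x m).1)
    have E2 := fun x => extract n (fun k => deriv (f2 k) x - V x * f1 k x)
      (fun _ => (0:ℂ)) (fun m => (hDR x m).2.1)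
    have E3 := fun x => extract n (fun k => deriv (f3 k) x)
      (fun k => f1 k x) (fun m => (hDR x m).2.2)
    refine ⟨fun x => (E3 x).2.2, fun x => by have := (E1 x).2.2; simpa using this,
      fun k hk x => by have := (E1 x).2.1 k hk; linear_combination this,
      fun k hk x => by have := (E2 x).2.1 k hk; linear_combination this,
      fun k hk x => by have := (E3 x).2.1 k hk; linear_combination this,
      fun x => by have := (E1 x).1; linear_combination this,
      fun x => by have := (E2 x).1; linear_combination this,
      fun x => by have := (E3 x).1; linear_combination this⟩
  · rintro ⟨g1, g3, d1, d2, d3, e1, e2, e3⟩ x m i j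
    have hS1 : (∑ k ∈ Finset.range (n+1),
        ((deriv (f1 k) x + V x * f2 k x) * m^(n-k) + (-(f3 k x)) * m^(n-k+1))) = 0 :=
      telescope n _ _ m (by have := e1 x; linear_combination this)
        (fun j hj => by have := d1 j hj x; linear_combination this)
        (by have := g3 x; linear_combination -this)
    have hS2 : (∑ k ∈ Finset.range (n+1),
        ((deriv (f2 k) x - V x * f1 k x) * m^(n-k) + 0 * m^(n-k+1))) = 0 :=
      telescope n _ (fun _ => (0:ℂ)) m (by have := e2 x; linear_combination this)
        (fun j hj => by have := d2 j hj x; linear_combination this) rfl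
    have hS3 : (∑ k ∈ Finset.range (n+1),
        ((deriv (f3 k) x) * m^(n-k) + (f1 k x) * m^(n-k+1))) = 0 :=
      telescope n _ _ m (e3 x)
        (fun j hj => by have := d3 j hj x; linear_combination this) (g1 x)
    have hDR := (key x m).mpr ⟨hS1, hS2, hS3⟩
    rw [hRHS x m, ← hDR]
    exact hD x m i j
end

section
/- Let Q₁, Q₂, Q₃ be linearly independent 4×4 complex matrices satisfying [Q₁,Q₂] = Q₃, [Q₂,Q₃] = Q₁, [Q₃,Q₁] = Q₂. Let f₁,f₂,f₃ : ℝ → ℂ be continuous, let 𝒱 : ℝ → GL(4,ℂ) be differentiable, let g : ℝ → ℂ be differentiable with g(x) ≠ 0 for all x, and let f̃₁,f̃₂,f̃₃ : ℝ → ℂ be continuous. Assume: (i) 𝒱(x)⁻¹𝒱'(x) + 𝒱(x)⁻¹(Σ_a f_a(x)Q_a)𝒱(x) = Σ_a f̃_a(x)Q_a for all x; (ii) setting G(x) = Σ_a g_a(x)Q_a for some differentiable g_a : ℝ → ℂ, one has 𝒱(x)⁻¹G(x)𝒱(x) = g(x)Q₁ for all x; (iii) the symmetry condition G'(x) = Σ_a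 f_a(x)(G(x)Q_a − Q_aG(x)) holds for all x. Then f̃₂ ≡ 0 and f̃₃ ≡ 0, g is constant, and for any x₀ ∈ ℝ every differentiable solution ψ : ℝ → ℂ⁴ of ψ'(x) + Σ_a f_a(x)Q_aψ(x) = 0 is given in closed form by ψ(x) = 𝒱(x)·exp(−F(x)Q₁)·𝒱(x₀)⁻¹ψ(x₀), where F(x) = ∫_{x₀}^{x} f̃₁(t) dt. -/
open Matrix intervalIntegral

attribute [local instance] Matrix.linftyOpNormedRing Matrix.linftyOpNormedAlgebra

namespace Lemma1Aux

open Filter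

theorem hasDerivAt_matrix {f : ℝ → Matrix (Fin 4) (Fin 4) ℂ} {f' : Matrix (Fin 4) (Fin 4) ℂ}
    {x : ℝ} :
    HasDerivAt f f' x ↔ ∀ i j, HasDerivAt (fun t => f t i j) (f' i j) x := by
  constructor
  · intro h i j
    have h := hasDerivAt_iff_tendsto_slope.mp h
    rw [hasDerivAt_iff_tendsto_slope]
    exact ((continuous_apply_apply i j).tendsto f').comp h
  · intro h
    have : Tendsto (fun y => slope f x y) (nhdsWithin x {x}ᶜ) (nhds f') := by
      apply tendsto_pi_nhds.mpr
      intro i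
      apply tendsto_pi_nhds.mpr
      intro j
      exact hasDerivAt_iff_tendsto_slope.mp (h i j)
    exact hasDerivAt_iff_tendsto_slope.mpr this

theorem hasDerivAt_mulVec {A : ℝ → Matrix (Fin 4) (Fin 4) ℂ} {A' : Matrix (Fin 4) (Fin 4) ℂ}
    {v : ℝ → Fin 4 → ℂ} {v' : Fin 4 → ℂ} {x : ℝ}
    (hA : HasDerivAt A A' x) (hv : HasDerivAt v v' x) :
    HasDerivAt (fun t => A t *ᵥ v t) (A' *ᵥ v x + A x *ᵥ v') x := by
  have hA' := hasDerivAt_matrix.mp hA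
  have hv' : ∀ i, HasDerivAt (fun t => v t i) (v' i) x := fun i => hasDerivAt_pi.mp hv i
  apply hasDerivAt_pi.mpr
  intro i
  have hs : HasDerivAt (fun t => ∑ j : Fin 4, A t i j * v t j)
      (∑ j : Fin 4, (A' i j * v x j + A x i j * v' j)) x :=
    HasDerivAt.fun_sum fun j _ => (hA' i j).mul (hv' j)
  convert hs using 1
  all_goals try rfl
  simp [Matrix.mulVec, dotProduct, Finset.sum_add_distrib]

theorem key_alg (V Vi D A N : Matrix (Fin 4) (Fin 4) ℂ)
    (h1 : Vi * V = 1) (h2 : V * Vi = 1) :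
    (-(Vi * D * Vi) * (V * N * Vi) + Vi * ((V * N * Vi) * A - A * (V * N * Vi))) * V
      + Vi * (V * N * Vi) * D
    = N * (Vi * D + Vi * A * V) - (Vi * D + Vi * A * V) * N := by
  have e1 : ∀ X : Matrix (Fin 4) (Fin 4) ℂ, Vi * (V * X) = X := fun X => by
    rw [← Matrix.mul_assoc, h1, Matrix.one_mul]
  have e2 : ∀ X : Matrix (Fin 4) (Fin 4) ℂ, V * (Vi * X) = X := fun X => by
    rw [← Matrix.mul_assoc, h2, Matrix.one_mul]
  simp only [Matrix.mul_assoc, mul_sub, sub_mul, neg_mul, add_mul, mul_add, e1, e2, h1, h2,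
    Matrix.mul_one, Matrix.one_mul, mul_one, one_mul]
  noncomm_ring

end Lemma1Aux

open Lemma1Aux

/-- Quantitative form of Lemma 1: a first-order system `ψ' + Σ_a f_a(x)Q_aψ = 0` with
`so(3)`-valued coefficient matrix admitting a Lie symmetry `G(x) = Σ_a g_a(x)Q_a`, brought
by a gauge transformation `𝒱` to the form `d/dx + Σ_a f̃_aQ_a` with the symmetry in normal
form `g(x)Q₁`, is integrable by quadratures: `f̃₂ ≡ 0`, `f̃₃ ≡ 0`, `g` is constant, and
every solution is `ψ(x) = 𝒱(x)·exp(-F(x)Q₁)·𝒱(x₀)⁻¹ψ(x₀)` with `F(x) = ∫_{x₀}^x f̃₁`. -/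
theorem lemma1_integrability_by_quadratures
    (Q : Fin 3 → Matrix (Fin 4) (Fin 4) ℂ)
    (hind : LinearIndependent ℂ Q)
    (h12 : Q 0 * Q 1 - Q 1 * Q 0 = Q 2)
    (h23 : Q 1 * Q 2 - Q 2 * Q 1 = Q 0)
    (h31 : Q 2 * Q 0 - Q 0 * Q 2 = Q 1)
    (f : Fin 3 → ℝ → ℂ) (hf : ∀ a, Continuous (f a))
    (𝒱 : ℝ → Matrix (Fin 4) (Fin 4) ℂ)
    (h𝒱inv : ∀ x, IsUnit (𝒱 x))
    (h𝒱diff : ∀ i j, Differentiable ℝ (fun x => 𝒱 x i j))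
    (g : ℝ → ℂ) (hg : Differentiable ℝ g) (hg0 : ∀ x, g x ≠ 0)
    (ftilde : Fin 3 → ℝ → ℂ) (hftilde : ∀ a, Continuous (ftilde a))
    (ga : Fin 3 → ℝ → ℂ) (hga : ∀ a, Differentiable ℝ (ga a))
    (G : ℝ → Matrix (Fin 4) (Fin 4) ℂ)
    (hG : ∀ x, G x = ∑ a : Fin 3, ga a x • Q a)
    (hi : ∀ x : ℝ,
      (𝒱 x)⁻¹ * (Matrix.of fun i j => deriv (fun t => 𝒱 t i j) x)
        + (𝒱 x)⁻¹ * (∑ a : Fin 3, f a x • Q a) * 𝒱 x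
      = ∑ a : Fin 3, ftilde a x • Q a)
    (hii : ∀ x : ℝ, (𝒱 x)⁻¹ * G x * 𝒱 x = g x • Q 0)
    (hiii : ∀ (x : ℝ) (i j : Fin 4),
      HasDerivAt (fun t => G t i j)
        ((∑ a : Fin 3, f a x • (G x * Q a - Q a * G x)) i j) x) :
    (∀ x, ftilde 1 x = 0) ∧ (∀ x, ftilde 2 x = 0) ∧ (∀ x y, g x = g y) ∧
    (∀ x₀ : ℝ, ∀ ψ : ℝ → (Fin 4 → ℂ),
      (∀ x : ℝ, HasDerivAt ψ (-(∑ a : Fin 3, f a x • (Q a *ᵥ ψ x))) x) →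
      ∀ x : ℝ,
        ψ x = 𝒱 x *ᵥ
          (NormedSpace.exp (-(∫ t in x₀..x, ftilde 0 t) • Q 0) *ᵥ
            ((𝒱 x₀)⁻¹ *ᵥ ψ x₀))) := by
  classical
  have hdet : ∀ x, IsUnit (𝒱 x).det := fun x => (Matrix.isUnit_iff_isUnit_det _).mp (h𝒱inv x)
  have hVV : ∀ x, (𝒱 x)⁻¹ * 𝒱 x = 1 := fun x => Matrix.nonsing_inv_mul _ (hdet x)
  have hVV' : ∀ x, 𝒱 x * (𝒱 x)⁻¹ = 1 := fun x => Matrix.mul_nonsing_inv _ (hdet x)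
  have hW : ∀ x, HasDerivAt 𝒱 (Matrix.of fun i j => deriv (fun t => 𝒱 t i j) x) x := fun x =>
    hasDerivAt_matrix.mpr fun i j => ((h𝒱diff i j) x).hasDerivAt
  have hVinv : ∀ x, HasDerivAt (fun t => (𝒱 t)⁻¹)
      (-((𝒱 x)⁻¹ * (Matrix.of fun i j => deriv (fun t => 𝒱 t i j) x) * (𝒱 x)⁻¹)) x := by
    intro x
    obtain ⟨u, hu⟩ := h𝒱inv x
    have h0 := hasFDerivAt_ringInverse (𝕜 := ℝ) u
    rw [hu] at h0
    have h1 := h0.comp_hasDerivAt x (hW x)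
    have h2 : Ring.inverse ∘ 𝒱 = fun t => (𝒱 t)⁻¹ := by
      funext t
      rw [Function.comp_apply, Matrix.nonsing_inv_eq_ringInverse]
    rw [h2] at h1
    convert h1 using 1
    all_goals try rfl
    have hui : (↑u⁻¹ : Matrix (Fin 4) (Fin 4) ℂ) = (𝒱 x)⁻¹ := by
      rw [Matrix.coe_units_inv, hu]
    simp [ContinuousLinearMap.mulLeftRight_apply, hui, Matrix.mul_assoc]
  have hGd : ∀ x, HasDerivAt G
      (G x * (∑ a : Fin 3, f a x • Q a) - (∑ a : Fin 3, f a x • Q a) * G x) x := by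
    intro x
    have h0 := hasDerivAt_matrix.mpr (hiii x)
    convert h0 using 2
    rw [Finset.mul_sum, Finset.sum_mul, ← Finset.sum_sub_distrib]
    congr 1
    funext a
    rw [mul_smul_comm, smul_mul_assoc, smul_sub]
  have hbr : ∀ c0 c1 c2 : ℂ,
      Q 0 * (c0 • Q 0 + c1 • Q 1 + c2 • Q 2) - (c0 • Q 0 + c1 • Q 1 + c2 • Q 2) * Q 0
        = c1 • Q 2 - c2 • Q 1 := by
    intro c0 c1 c2
    have h1' : Q 0 * Q 1 = Q 1 * Q 0 + Q 2 := by rw [← h12]; abel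
    have h2' : Q 0 * Q 2 = Q 2 * Q 0 - Q 1 := by rw [← h31]; abel
    simp only [mul_add, add_mul, mul_smul_comm, smul_mul_assoc, h1', h2']
    module
  have key : ∀ x, deriv g x • Q 0 =
      (g x * ftilde 1 x) • Q 2 - (g x * ftilde 2 x) • Q 1 := by
    intro x
    have hGx : G x = 𝒱 x * (g x • Q 0) * (𝒱 x)⁻¹ := by
      rw [← hii x]
      simp only [Matrix.mul_assoc]
      rw [hVV' x, Matrix.mul_one, ← Matrix.mul_assoc, hVV' x, Matrix.one_mul]
    have hK : HasDerivAt (fun t => (𝒱 t)⁻¹ * G t * 𝒱 t)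
        ((-((𝒱 x)⁻¹ * (Matrix.of fun i j => deriv (fun t => 𝒱 t i j) x) * (𝒱 x)⁻¹) * G x
            + (𝒱 x)⁻¹ * (G x * (∑ a : Fin 3, f a x • Q a)
              - (∑ a : Fin 3, f a x • Q a) * G x)) * 𝒱 x
          + (𝒱 x)⁻¹ * G x * (Matrix.of fun i j => deriv (fun t => 𝒱 t i j) x)) x :=
      ((hVinv x).mul (hGd x)).mul (hW x)
    have hK2 : HasDerivAt (fun t => (𝒱 t)⁻¹ * G t * 𝒱 t) (deriv g x • Q 0) x := by
      have hfn : (fun t => g t • Q 0) = fun t => (𝒱 t)⁻¹ * G t * 𝒱 t :=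
        funext fun t => (hii t).symm
      have base : HasDerivAt (fun t => g t • Q 0) (deriv g x • Q 0) x :=
        ((hg x).hasDerivAt).smul_const (Q 0)
      rwa [hfn] at base
    have huniq := hK2.unique hK
    rw [hGx] at huniq
    rw [key_alg (𝒱 x) ((𝒱 x)⁻¹) (Matrix.of fun i j => deriv (fun t => 𝒱 t i j) x)
      (∑ a : Fin 3, f a x • Q a) (g x • Q 0) (hVV x) (hVV' x)] at huniq
    rw [hi x] at huniq
    rw [huniq, smul_mul_assoc, mul_smul_comm, ← smul_sub, Fin.sum_univ_three,
      hbr (ftilde 0 x) (ftilde 1 x) (ftilde 2 x), smul_sub, smul_smul, smul_smul]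
  have hzero : ∀ x, deriv g x = 0 ∧ ftilde 1 x = 0 ∧ ftilde 2 x = 0 := by
    intro x
    have hsum : ∑ i : Fin 3, (![deriv g x, g x * ftilde 2 x, -(g x * ftilde 1 x)]) i • Q i
        = 0 := by
      simp only [Fin.sum_univ_three, Matrix.cons_val_zero, Matrix.cons_val_one,
        Matrix.head_cons, Matrix.cons_val_two, Matrix.tail_cons]
      rw [key x]
      module
    have hlin := Fintype.linearIndependent_iff.mp hind _ hsum
    have h0 := hlin 0
    have h1 := hlin 1
    have h2 := hlin 2
    simp only [Matrix.cons_val_zero, Matrix.cons_val_one, Matrix.head_cons,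
      Matrix.cons_val_two, Matrix.tail_cons, neg_eq_zero] at h0 h1 h2
    refine ⟨h0, ?_, ?_⟩
    · rcases mul_eq_zero.mp h2 with h | h
      · exact absurd h (hg0 x)
      · exact h
    · rcases mul_eq_zero.mp h1 with h | h
      · exact absurd h (hg0 x)
      · exact h
  refine ⟨fun x => (hzero x).2.1, fun x => (hzero x).2.2,
    fun x y => is_const_of_deriv_eq_zero hg (fun t => (hzero t).1) x y, ?_⟩
  intro x₀ ψ hψ x
  have hsumv : ∀ (s : ℝ) (w : Fin 4 → ℂ),
      ∑ a : Fin 3, f a s • (Q a *ᵥ w) = (∑ a : Fin 3, f a s • Q a) *ᵥ w := by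
    intro s w
    rw [Fin.sum_univ_three, Fin.sum_univ_three, Matrix.add_mulVec, Matrix.add_mulVec,
      Matrix.smul_mulVec, Matrix.smul_mulVec, Matrix.smul_mulVec]
  have hFder : ∀ s : ℝ, HasDerivAt (fun u => ∫ t in x₀..u, ftilde 0 t) (ftilde 0 s) s := fun s =>
    intervalIntegral.integral_hasDerivAt_right ((hftilde 0).intervalIntegrable _ _)
      ((hftilde 0).stronglyMeasurableAtFilter _ _) (hftilde 0).continuousAt
  have hE : ∀ s : ℝ, HasDerivAt
      (fun u => NormedSpace.exp ((∫ t in x₀..u, ftilde 0 t) • Q 0))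
      (ftilde 0 s • (NormedSpace.exp ((∫ t in x₀..s, ftilde 0 t) • Q 0) * Q 0)) s := fun s =>
    by have := (hasDerivAt_exp_smul_const (𝕂 := ℂ) (Q 0) (∫ t in x₀..s, ftilde 0 t)).scomp s (hFder s); exact this
  have hχd : ∀ s : ℝ, HasDerivAt
      (fun u => NormedSpace.exp ((∫ t in x₀..u, ftilde 0 t) • Q 0) *ᵥ ((𝒱 u)⁻¹ *ᵥ ψ u))
      0 s := by
    intro s
    have hinner := hasDerivAt_mulVec (hVinv s) (hψ s)
    have houter := hasDerivAt_mulVec (hE s) hinner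
    have hAt : ((𝒱 s)⁻¹ * (Matrix.of fun i j => deriv (fun t => 𝒱 t i j) s))
        + ((𝒱 s)⁻¹ * (∑ a : Fin 3, f a s • Q a)) * 𝒱 s = ftilde 0 s • Q 0 := by
      rw [hi s, Fin.sum_univ_three, (hzero s).2.1, (hzero s).2.2, zero_smul, zero_smul,
        add_zero, add_zero]
    have hAt' : (𝒱 s)⁻¹ * (Matrix.of fun i j => deriv (fun t => 𝒱 t i j) s) * (𝒱 s)⁻¹
        + (𝒱 s)⁻¹ * (∑ a : Fin 3, f a s • Q a)
        = (ftilde 0 s • Q 0) * (𝒱 s)⁻¹ := by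
      rw [← hAt, add_mul,
        Matrix.mul_assoc ((𝒱 s)⁻¹ * (∑ a : Fin 3, f a s • Q a)) (𝒱 s) ((𝒱 s)⁻¹),
        hVV' s, Matrix.mul_one]
    have hmat : ftilde 0 s • (NormedSpace.exp ((∫ t in x₀..s, ftilde 0 t) • Q 0) * Q 0
          * (𝒱 s)⁻¹)
        = NormedSpace.exp ((∫ t in x₀..s, ftilde 0 t) • Q 0)
            * ((𝒱 s)⁻¹ * (Matrix.of fun i j => deriv (fun t => 𝒱 t i j) s) * (𝒱 s)⁻¹)
          + NormedSpace.exp ((∫ t in x₀..s, ftilde 0 t) • Q 0)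
            * ((𝒱 s)⁻¹ * (∑ a : Fin 3, f a s • Q a)) := by
      rw [← mul_add, hAt', smul_mul_assoc, mul_smul_comm, Matrix.mul_assoc]
    have hval : (ftilde 0 s • (NormedSpace.exp ((∫ t in x₀..s, ftilde 0 t) • Q 0) * Q 0))
          *ᵥ ((𝒱 s)⁻¹ *ᵥ ψ s)
        + NormedSpace.exp ((∫ t in x₀..s, ftilde 0 t) • Q 0) *ᵥ
            ((-((𝒱 s)⁻¹ * (Matrix.of fun i j => deriv (fun t => 𝒱 t i j) s) * (𝒱 s)⁻¹))
                *ᵥ ψ s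
              + (𝒱 s)⁻¹ *ᵥ (-(∑ a : Fin 3, f a s • (Q a *ᵥ ψ s)))) = 0 := by
      rw [hsumv s (ψ s)]
      simp only [Matrix.mulVec_neg, Matrix.neg_mulVec, Matrix.mulVec_add,
        Matrix.mulVec_mulVec, Matrix.smul_mulVec]
      rw [smul_mul_assoc, hmat, Matrix.add_mulVec]
      abel
    rwa [hval] at houter
  have hconst : ∀ s : ℝ,
      NormedSpace.exp ((∫ t in x₀..s, ftilde 0 t) • Q 0) *ᵥ ((𝒱 s)⁻¹ *ᵥ ψ s)
        = (𝒱 x₀)⁻¹ *ᵥ ψ x₀ := by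
    intro s
    have hcomp : ∀ i : Fin 4, (fun u : ℝ =>
        (NormedSpace.exp ((∫ t in x₀..u, ftilde 0 t) • Q 0) *ᵥ ((𝒱 u)⁻¹ *ᵥ ψ u)) i) s
        = (fun u : ℝ =>
        (NormedSpace.exp ((∫ t in x₀..u, ftilde 0 t) • Q 0) *ᵥ ((𝒱 u)⁻¹ *ᵥ ψ u)) i) x₀ :=
      fun i =>
        is_const_of_deriv_eq_zero
          (fun t => ((hasDerivAt_pi.mp (hχd t)) i).differentiableAt)
          (fun t => by simpa using ((hasDerivAt_pi.mp (hχd t)) i).deriv) s x₀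
    have heq : NormedSpace.exp ((∫ t in x₀..s, ftilde 0 t) • Q 0) *ᵥ ((𝒱 s)⁻¹ *ᵥ ψ s)
        = NormedSpace.exp ((∫ t in x₀..x₀, ftilde 0 t) • Q 0) *ᵥ ((𝒱 x₀)⁻¹ *ᵥ ψ x₀) :=
      funext fun i => hcomp i
    rw [heq, intervalIntegral.integral_same, zero_smul, NormedSpace.exp_zero,
      Matrix.one_mulVec]
  have hEE : NormedSpace.exp (-(∫ t in x₀..x, ftilde 0 t) • Q 0)
      * NormedSpace.exp ((∫ t in x₀..x, ftilde 0 t) • Q 0) = 1 := by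
    refine (NormedSpace.exp_add_of_commute (((Commute.refl (Q 0)).smul_left _).smul_right _)).symm.trans ?_
    rw [show (-(∫ t in x₀..x, ftilde 0 t)) • Q 0 + (∫ t in x₀..x, ftilde 0 t) • Q 0
        = (0 : Matrix (Fin 4) (Fin 4) ℂ) by rw [neg_smul, neg_add_cancel]]
    exact NormedSpace.exp_zero
  symm
  calc 𝒱 x *ᵥ (NormedSpace.exp (-(∫ t in x₀..x, ftilde 0 t) • Q 0) *ᵥ ((𝒱 x₀)⁻¹ *ᵥ ψ x₀))
      = 𝒱 x *ᵥ (NormedSpace.exp (-(∫ t in x₀..x, ftilde 0 t) • Q 0) *ᵥ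
          (NormedSpace.exp ((∫ t in x₀..x, ftilde 0 t) • Q 0) *ᵥ ((𝒱 x)⁻¹ *ᵥ ψ x))) := by
        rw [hconst x]
    _ = (𝒱 x * NormedSpace.exp (-(∫ t in x₀..x, ftilde 0 t) • Q 0)
          * NormedSpace.exp ((∫ t in x₀..x, ftilde 0 t) • Q 0) * (𝒱 x)⁻¹) *ᵥ ψ x := by
        rw [Matrix.mulVec_mulVec, Matrix.mulVec_mulVec, Matrix.mulVec_mulVec]
    _ = ψ x := by
        rw [Matrix.mul_assoc (𝒱 x) (NormedSpace.exp (-(∫ t in x₀..x, ftilde 0 t) • Q 0))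
          (NormedSpace.exp ((∫ t in x₀..x, ftilde 0 t) • Q 0)), hEE, Matrix.mul_one,
          hVV' x, Matrix.one_mulVec]
end
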